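/- arXiv:1412.3634 — 6 statements merged into one kernel-verified Lean document; each statement's English description precedes it below -/
import Mathlib

section
/- Let H be a finite-dimensional Hilbert space, and let W ⊆ B(H), W̃ ⊆ B(H)* be subspaces containing order units (a strictly positive operator in W and a strictly positive-definite functional in W̃) such that K = W ∩ W̃^⊥ satisfies K ∩ S⁺ = {0}; let L : W → V = W/K be the quotient map and L̃ : W^⊥ + W̃ → (W^⊥ + W̃)/W^⊥ ≅ V* the dual quotient map. For a linear map D : V → V, there exists a completely positive map F : B(H) → B(H) satisfying (1) (F ⊗ id_n)(W_n) ⊆ W_n for all n, (2) (F* ⊗ id_n)(W̃_n) ⊆ W̃_n for all n, and (3) L ∘ F|_W = D ∘ L, if and only if D ∈ (L ⊗ L̃)(S^CP). -/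
open Matrix
open scoped ComplexOrder

/-- `Mat n` is `B(H)` for `H = ℂⁿ`: the `n × n` complex matrices. -/
abbrev Mat (n : ℕ) := Matrix (Fin n) (Fin n) ℂ

/-- The ampliation `Φ ⊗ id_k` of a linear map `Φ` on `B(ℂⁿ)`, acting block-wise on
`B(ℂⁿ ⊗ ℂᵏ)`. -/
noncomputable def amplL {n : ℕ} (Φ : Mat n →ₗ[ℂ] Mat n) (k : ℕ) :
    Matrix (Fin n × Fin k) (Fin n × Fin k) ℂ →ₗ[ℂ]
      Matrix (Fin n × Fin k) (Fin n × Fin k) ℂ where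
  toFun X := Matrix.of fun p q =>
    Φ (Matrix.of fun i j => X (i, p.2) (j, q.2)) p.1 q.1
  map_add' X Y := by
    ext p q
    have h : (Matrix.of fun i j => X (i, p.2) (j, q.2) + Y (i, p.2) (j, q.2))
        = (Matrix.of fun i j => X (i, p.2) (j, q.2))
          + (Matrix.of fun i j => Y (i, p.2) (j, q.2)) := by
      ext i j
      simp
    simp only [Matrix.of_apply, Matrix.add_apply]
    rw [h, map_add, Matrix.add_apply]
  map_smul' c X := by
    ext p q
    have h : (Matrix.of fun i j => c • X (i, p.2) (j, q.2))
        = c • (Matrix.of fun i j => X (i, p.2) (j, q.2)) := by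
      ext i j
      simp
    simp only [Matrix.of_apply, Matrix.smul_apply, RingHom.id_apply]
    rw [h, _root_.map_smul, Matrix.smul_apply]

/-- A linear map on `B(ℂⁿ)` is completely positive if all its ampliations
`Φ ⊗ id_k` preserve positive semidefiniteness. -/
def IsCP {n : ℕ} (Φ : Mat n →ₗ[ℂ] Mat n) : Prop :=
  ∀ (k : ℕ) (X : Matrix (Fin n × Fin k) (Fin n × Fin k) ℂ),
    X.PosSemidef → (amplL Φ k X).PosSemidef

/-- The cone `C = L(W⁺)`: the image under the quotient map `L` of the positive
semidefinite elements of `W`. -/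
def coneC {n : ℕ} {V : Type} [AddCommGroup V] [Module ℂ V]
    (W : Submodule ℂ (Mat n)) (L : ↥W →ₗ[ℂ] V) : Set V :=
  {v | ∃ x : ↥W, ((x : Mat n)).PosSemidef ∧ v = L x}

/-- The dual cone `C* = {f ∈ V* : f(x) ≥ 0 for all x ∈ C}`. -/
def dualCone {V : Type} [AddCommGroup V] [Module ℂ V] (C : Set V) :
    Set (Module.Dual ℂ V) :=
  {f | ∀ x ∈ C, 0 ≤ f x}

/-- The SDR mapping cone `P = (L ⊗ L̃)(S^CP)`: the linear maps on `V` obtained, via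
the quotient maps `L` and `L̃`, from completely positive maps `F` on `B(H)` with
`F(W) ⊆ W` and `F*(W̃) ⊆ W̃`. -/
def mappingCone {n : ℕ} {V : Type} [AddCommGroup V] [Module ℂ V]
    (W : Submodule ℂ (Mat n)) (Wt : Submodule ℂ (Module.Dual ℂ (Mat n)))
    (L : ↥W →ₗ[ℂ] V)
    (Lt : ↥(W.dualAnnihilator ⊔ Wt) →ₗ[ℂ] Module.Dual ℂ V) : Set (V →ₗ[ℂ] V) :=
  {Dm | ∃ F : Mat n →ₗ[ℂ] Mat n, IsCP F ∧ (∀ X ∈ W, F X ∈ W) ∧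
    (∀ σ ∈ Wt, σ ∘ₗ F ∈ Wt) ∧
    ∀ (σ : ↥(W.dualAnnihilator ⊔ Wt)) (x : ↥W),
      Lt σ (Dm (L x)) = (σ : Module.Dual ℂ (Mat n)) (F (x : Mat n))}

open Kronecker

/-- The level-`k` space `W_k = W ⊗ B(ℂᵏ) ⊆ B(H ⊗ ℂᵏ)` of a subspace `W ⊆ B(H)`:
the span of the Kronecker products `w ⊗ B` with `w ∈ W`. -/
noncomputable def levelSpace {n : ℕ} (W : Submodule ℂ (Mat n)) (k : ℕ) :
    Submodule ℂ (Matrix (Fin n × Fin k) (Fin n × Fin k) ℂ) :=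
  Submodule.span ℂ {X | ∃ w ∈ W, ∃ B : Matrix (Fin k) (Fin k) ℂ, X = w ⊗ₖ B}

/-- The simple tensor `σ ⊗ τ` of functionals, as a functional on `B(H ⊗ ℂᵏ)`:
apply `σ` blockwise and then `τ`. -/
noncomputable def funTensor {n k : ℕ} (σ : Module.Dual ℂ (Mat n))
    (τ : Module.Dual ℂ (Matrix (Fin k) (Fin k) ℂ)) :
    Module.Dual ℂ (Matrix (Fin n × Fin k) (Fin n × Fin k) ℂ) where
  toFun X := τ (Matrix.of fun a b => σ (Matrix.of fun i j => X (i, a) (j, b)))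
  map_add' X Y := by
    have h : (Matrix.of fun a b => σ (Matrix.of fun i j => (X + Y) (i, a) (j, b)))
        = (Matrix.of fun a b => σ (Matrix.of fun i j => X (i, a) (j, b)))
          + (Matrix.of fun a b => σ (Matrix.of fun i j => Y (i, a) (j, b))) := by
      ext a b
      have h2 : (Matrix.of fun i j => X (i, a) (j, b) + Y (i, a) (j, b))
          = (Matrix.of fun i j => X (i, a) (j, b))
            + (Matrix.of fun i j => Y (i, a) (j, b)) := by
        ext i j; simp
      simp only [Matrix.of_apply, Matrix.add_apply]
      rw [h2, map_add]
    show τ _ = τ _ + τ _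
    rw [h, map_add]
  map_smul' c X := by
    have h : (Matrix.of fun a b => σ (Matrix.of fun i j => (c • X) (i, a) (j, b)))
        = c • (Matrix.of fun a b => σ (Matrix.of fun i j => X (i, a) (j, b))) := by
      ext a b
      have h2 : (Matrix.of fun i j => c • X (i, a) (j, b))
          = c • (Matrix.of fun i j => X (i, a) (j, b)) := by
        ext i j; simp
      simp only [Matrix.of_apply, Matrix.smul_apply]
      rw [h2, _root_.map_smul]
    show τ _ = c • τ _
    rw [h, _root_.map_smul]

/-- The level-`k` space `W̃_k = W̃ ⊗ B(ℂᵏ)* ⊆ B(H ⊗ ℂᵏ)*` of a subspace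
`W̃ ⊆ B(H)*`. -/
noncomputable def dualLevelSpace {n : ℕ} (Wt : Submodule ℂ (Module.Dual ℂ (Mat n)))
    (k : ℕ) : Submodule ℂ (Module.Dual ℂ (Matrix (Fin n × Fin k) (Fin n × Fin k) ℂ)) :=
  Submodule.span ℂ {Sg | ∃ σ ∈ Wt, ∃ τ : Module.Dual ℂ (Matrix (Fin k) (Fin k) ℂ),
    Sg = funTensor σ τ}


/-! Auxiliary lemmas -/

lemma amplL_apply' {n k : ℕ} (Φ : Mat n →ₗ[ℂ] Mat n)
    (X : Matrix (Fin n × Fin k) (Fin n × Fin k) ℂ) (i j : Fin n) (a b : Fin k) :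
    amplL Φ k X (i, a) (j, b)
      = Φ (Matrix.of fun i' j' => X (i', a) (j', b)) i j := rfl

lemma funTensor_apply' {n k : ℕ} (σ : Module.Dual ℂ (Mat n))
    (τ : Module.Dual ℂ (Matrix (Fin k) (Fin k) ℂ))
    (X : Matrix (Fin n × Fin k) (Fin n × Fin k) ℂ) :
    funTensor σ τ X
      = τ (Matrix.of fun a b => σ (Matrix.of fun i j => X (i, a) (j, b))) := rfl

lemma amplL_kron {n k : ℕ} (Φ : Mat n →ₗ[ℂ] Mat n) (w : Mat n)
    (B : Matrix (Fin k) (Fin k) ℂ) : amplL Φ k (w ⊗ₖ B) = (Φ w) ⊗ₖ B := by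
  ext ⟨i, a⟩ ⟨j, b⟩
  have h : (Matrix.of fun i' j' => (w ⊗ₖ B) (i', a) (j', b)) = B a b • w := by
    ext i' j'
    simp [Matrix.kroneckerMap_apply, mul_comm]
  rw [Matrix.kroneckerMap_apply, amplL_apply', h, _root_.map_smul,
    Matrix.smul_apply, smul_eq_mul, mul_comm]

lemma funTensor_comp_amplL {n k : ℕ} (Φ : Mat n →ₗ[ℂ] Mat n)
    (σ : Module.Dual ℂ (Mat n)) (τ : Module.Dual ℂ (Matrix (Fin k) (Fin k) ℂ)) :
    funTensor σ τ ∘ₗ amplL Φ k = funTensor (σ ∘ₗ Φ) τ := rfl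

/-- Embedding `X ↦ X ⊗ 1` into the level-1 space. -/
noncomputable def embOne {n : ℕ} :
    Mat n →ₗ[ℂ] Matrix (Fin n × Fin 1) (Fin n × Fin 1) ℂ where
  toFun X := X ⊗ₖ (1 : Matrix (Fin 1) (Fin 1) ℂ)
  map_add' X Y := Matrix.add_kronecker X Y 1
  map_smul' c X := Matrix.smul_kronecker c X 1

/-- Extraction of the `(·,0),(·,0)` block. -/
noncomputable def extOne {n : ℕ} :
    Matrix (Fin n × Fin 1) (Fin n × Fin 1) ℂ →ₗ[ℂ] Mat n where
  toFun Y := Matrix.of fun i j => Y (i, 0) (j, 0)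
  map_add' X Y := by ext i j; simp
  map_smul' c X := by ext i j; simp

/-- The `(0,0)` entry functional on `1 × 1` matrices. -/
noncomputable def tau00 : Module.Dual ℂ (Matrix (Fin 1) (Fin 1) ℂ) where
  toFun Y := Y 0 0
  map_add' X Y := rfl
  map_smul' c X := rfl

lemma extOne_kron {n : ℕ} (w : Mat n) (B : Matrix (Fin 1) (Fin 1) ℂ) :
    extOne (w ⊗ₖ B) = B 0 0 • w := by
  ext i j
  simp [extOne, Matrix.kroneckerMap_apply, mul_comm]

lemma funTensor_comp_emb {n : ℕ} (σ : Module.Dual ℂ (Mat n))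
    (τ : Module.Dual ℂ (Matrix (Fin 1) (Fin 1) ℂ)) :
    funTensor σ τ ∘ₗ embOne (n := n) = τ 1 • σ := by
  apply LinearMap.ext; intro X
  rw [LinearMap.comp_apply, funTensor_apply']
  have h : (Matrix.of fun a b =>
        σ (Matrix.of fun i j => (embOne (n := n) X) (i, a) (j, b)))
      = σ X • (1 : Matrix (Fin 1) (Fin 1) ℂ) := by
    ext a b
    have ha : a = 0 := Subsingleton.elim a 0
    have hb : b = 0 := Subsingleton.elim b 0
    subst ha; subst hb
    have h2 : (Matrix.of fun i j =>
        (embOne (n := n) X) (i, (0 : Fin 1)) (j, (0 : Fin 1))) = X := by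
      ext i j
      simp [embOne, Matrix.kroneckerMap_apply, Matrix.one_apply]
    simp [h2, Matrix.one_apply]
  rw [h, _root_.map_smul]
  simp [smul_eq_mul, mul_comm]

/-- for a linear map `D : V → V` on the quotient operator system
`V = W/(W ∩ W̃^⊥)`, there exists a completely positive `F` on `B(H)` with
`(F ⊗ id_k)(W_k) ⊆ W_k` and `(F* ⊗ id_k)(W̃_k) ⊆ W̃_k` for all `k`, and
`L ∘ F|_W = D ∘ L`, if and only if `D ∈ (L ⊗ L̃)(S^CP)`. -/
theorem lifting_iff_mem_mapping_cone
    {n : ℕ} (W : Submodule ℂ (Mat n)) (Wt : Submodule ℂ (Module.Dual ℂ (Mat n)))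
    -- W and W̃ contain order units
    (horder : ∃ e ∈ W, e.PosDef)
    (horder' : ∃ t ∈ Wt, ∃ σ₀ : Mat n, σ₀.PosDef ∧ ∀ X : Mat n, t X = (σ₀ * X).trace)
    -- K = W ∩ W̃^⊥ contains no nonzero positive semidefinite element
    (hK : ∀ X : Mat n, X ∈ W → X ∈ Wt.dualCoannihilator → X.PosSemidef → X = 0)
    {V : Type} [AddCommGroup V] [Module ℂ V]
    -- L : W → V = W/K is the quotient map
    (L : ↥W →ₗ[ℂ] V) (hL : Function.Surjective L)
    (hLker : ∀ x : ↥W, L x = 0 ↔ (x : Mat n) ∈ Wt.dualCoannihilator)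
    -- L̃ : W^⊥ + W̃ → (W^⊥ + W̃)/W^⊥ ≅ V* is the dual quotient map
    (Lt : ↥(W.dualAnnihilator ⊔ Wt) →ₗ[ℂ] Module.Dual ℂ V)
    (hLt : Function.Surjective Lt)
    (hLtker : ∀ σ : ↥(W.dualAnnihilator ⊔ Wt),
      Lt σ = 0 ↔ (σ : Module.Dual ℂ (Mat n)) ∈ W.dualAnnihilator)
    (hpair : ∀ (σ : ↥(W.dualAnnihilator ⊔ Wt)) (x : ↥W),
      Lt σ (L x) = (σ : Module.Dual ℂ (Mat n)) (x : Mat n))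
    (Dm : V →ₗ[ℂ] V) :
    (∃ F : Mat n →ₗ[ℂ] Mat n, IsCP F ∧
      -- (1) (F ⊗ id_k)(W_k) ⊆ W_k for all k
      (∀ k : ℕ, ∀ X ∈ levelSpace W k, amplL F k X ∈ levelSpace W k) ∧
      -- (2) (F* ⊗ id_k)(W̃_k) ⊆ W̃_k for all k
      (∀ k : ℕ, ∀ Sg ∈ dualLevelSpace Wt k, Sg ∘ₗ amplL F k ∈ dualLevelSpace Wt k) ∧
      -- (3) L ∘ F|_W = D ∘ L
      (∀ x y : ↥W, (y : Mat n) = F (x : Mat n) → L y = Dm (L x))) ↔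
    Dm ∈ mappingCone W Wt L Lt := by
  constructor
  · rintro ⟨F, hCP, hlev, hdlev, hcomm⟩
    -- F maps W into W
    have hFW : ∀ X ∈ W, F X ∈ W := by
      intro X hX
      have hmem : (X ⊗ₖ (1 : Matrix (Fin 1) (Fin 1) ℂ)) ∈ levelSpace W 1 :=
        Submodule.subset_span ⟨X, hX, 1, rfl⟩
      have h1 := hlev 1 _ hmem
      rw [amplL_kron] at h1
      have h2 : levelSpace W 1 ≤ W.comap (extOne (n := n)) := by
        simp only [levelSpace]
        rw [Submodule.span_le]
        rintro Z ⟨w, hw, B, rfl⟩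
        simp only [SetLike.mem_coe, Submodule.mem_comap, extOne_kron]
        exact W.smul_mem _ hw
      have h3 := h2 h1
      rw [Submodule.mem_comap, extOne_kron, Matrix.one_apply_eq, one_smul] at h3
      exact h3
    -- F* maps Wt into Wt
    have hFWt : ∀ σ ∈ Wt, σ ∘ₗ F ∈ Wt := by
      intro σ hσ
      have hmem : funTensor σ tau00 ∈ dualLevelSpace Wt 1 :=
        Submodule.subset_span ⟨σ, hσ, tau00, rfl⟩
      have h1 := hdlev 1 _ hmem
      rw [funTensor_comp_amplL] at h1
      have h2 : dualLevelSpace Wt 1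
          ≤ Wt.comap (LinearMap.lcomp ℂ ℂ (embOne (n := n))) := by
        simp only [dualLevelSpace]
        rw [Submodule.span_le]
        rintro Z ⟨σ', hσ', τ, rfl⟩
        simp only [SetLike.mem_coe, Submodule.mem_comap]
        have he : LinearMap.lcomp ℂ ℂ (embOne (n := n)) (funTensor σ' τ)
            = τ 1 • σ' := funTensor_comp_emb σ' τ
        rw [he]
        exact Wt.smul_mem _ hσ'
      have h3 := h2 h1
      rw [Submodule.mem_comap] at h3
      have he : LinearMap.lcomp ℂ ℂ (embOne (n := n)) (funTensor (σ ∘ₗ F) tau00)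
          = tau00 1 • (σ ∘ₗ F) := funTensor_comp_emb (σ ∘ₗ F) tau00
      rw [he] at h3
      have ht : tau00 (1 : Matrix (Fin 1) (Fin 1) ℂ) = 1 := by
        show (1 : Matrix (Fin 1) (Fin 1) ℂ) 0 0 = 1
        exact Matrix.one_apply_eq 0
      rwa [ht, one_smul] at h3
    refine ⟨F, hCP, hFW, hFWt, ?_⟩
    intro σ x
    have hy : ((⟨F (x : Mat n), hFW _ x.2⟩ : ↥W) : Mat n) = F (x : Mat n) := rfl
    rw [← hcomm x ⟨F (x : Mat n), hFW _ x.2⟩ rfl, hpair]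
  · rintro ⟨F, hCP, hFW, hFWt, hpr⟩
    refine ⟨F, hCP, ?_, ?_, ?_⟩
    · intro k X hX
      have hle : levelSpace W k ≤ (levelSpace W k).comap (amplL F k) := by
        simp only [levelSpace]
        rw [Submodule.span_le]
        rintro Z ⟨w, hw, B, rfl⟩
        simp only [SetLike.mem_coe, Submodule.mem_comap]
        rw [amplL_kron]
        exact Submodule.subset_span ⟨F w, hFW w hw, B, rfl⟩
      exact hle hX
    · intro k Sg hSg
      have hle : dualLevelSpace Wt k
          ≤ (dualLevelSpace Wt k).comap (LinearMap.lcomp ℂ ℂ (amplL F k)) := by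
        simp only [dualLevelSpace]
        rw [Submodule.span_le]
        rintro Z ⟨σ', hσ', τ, rfl⟩
        simp only [SetLike.mem_coe, Submodule.mem_comap]
        have he : LinearMap.lcomp ℂ ℂ (amplL F k) (funTensor σ' τ)
            = funTensor (σ' ∘ₗ F) τ := funTensor_comp_amplL F σ' τ
        rw [he]
        exact Submodule.subset_span ⟨σ' ∘ₗ F, hFWt σ' hσ', τ, rfl⟩
      exact hle hSg
    · intro x y hy
      have hall : ∀ φ : Module.Dual ℂ V, φ (L y - Dm (L x)) = 0 := by
        intro φ
        obtain ⟨σ, rfl⟩ := hLt φ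
        rw [map_sub, hpair σ y, hpr σ x, hy, sub_self]
      have hz := (Module.forall_dual_apply_eq_zero_iff ℂ (L y - Dm (L x))).mp hall
      exact sub_eq_zero.mp hz
end

section
/- Any two quasi-realizations R₁ = (V₁, π₁, D₁, τ₁) and R₂ = (V₂, π₂, D₂, τ₂) of the same process p, not necessarily of the same dimension, have isomorphic quotient realizations: there is a linear isomorphism T between the quotient spaces V̄₁ and V̄₂ such that π̄₁ = π̄₂ ∘ T, D̄₁(u) = T⁻¹ ∘ D̄₂(u) ∘ T for every u ∈ M, and τ̄₁ = T⁻¹(τ̄₂). -/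
/-- A quasi-realization of a stochastic process on the free monoid over a finite
alphabet `M`. -/
structure QuasiRealization (M : Type) [Fintype M] (V : Type) [AddCommGroup V]
    [Module ℝ V] where
  pi : V →ₗ[ℝ] ℝ
  tau : V
  D : FreeMonoid M →* Module.End ℝ V
  pi_stationary : pi ∘ₗ (∑ u : M, D (FreeMonoid.of u)) = pi
  tau_stationary : (∑ u : M, D (FreeMonoid.of u)) tau = tau

/-- The stochastic process generated by a quasi-realization: `p(w) = π (D(w) τ)`. -/
def QuasiRealization.proc {M : Type} [Fintype M] {V : Type} [AddCommGroup V]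
    [Module ℝ V] (R : QuasiRealization M V) (w : FreeMonoid M) : ℝ :=
  R.pi (R.D w R.tau)

variable {M : Type} [Fintype M]

/-- The accessible subspace `W = span{D(w) τ : w ∈ M*}`. -/
def accessibleSpace {U : Type} [AddCommGroup U] [Module ℝ U]
    (R : QuasiRealization M U) : Submodule ℝ U :=
  Submodule.span ℝ (Set.range fun w : FreeMonoid M => R.D w R.tau)

/-- The observable subspace `W̃ = span{π ∘ D(w) : w ∈ M*} ⊆ U*`. -/
def observableSpace {U : Type} [AddCommGroup U] [Module ℝ U]
    (R : QuasiRealization M U) : Submodule ℝ (Module.Dual ℝ U) :=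
  Submodule.span ℝ (Set.range fun w : FreeMonoid M => R.pi ∘ₗ (R.D w : U →ₗ[ℝ] U))

/-- The null subspace `W̃^⊥ = {v : σ(v) = 0 for all σ ∈ W̃}`. -/
def nullSpace {U : Type} [AddCommGroup U] [Module ℝ U]
    (R : QuasiRealization M U) : Submodule ℝ U :=
  (observableSpace R).dualCoannihilator

/-- `Rb` is (isomorphic to) the quotient realization of `R`: there is a canonical
projection `L` from the accessible subspace `W` of `R` onto the space of `Rb`, whose
kernel is `K = W ∩ W̃^⊥`, intertwining the `D`-maps, and transporting `τ` and `π`. -/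
def IsQuotientRealization {U : Type} [AddCommGroup U] [Module ℝ U]
    {V : Type} [AddCommGroup V] [Module ℝ V]
    (R : QuasiRealization M U) (Rb : QuasiRealization M V) : Prop :=
  ∃ L : ↥(accessibleSpace R) →ₗ[ℝ] V,
    Function.Surjective L ∧
    (∀ x : ↥(accessibleSpace R), L x = 0 ↔ (x : U) ∈ nullSpace R) ∧
    (∀ (w : FreeMonoid M) (x y : ↥(accessibleSpace R)),
      (y : U) = R.D w (x : U) → L y = Rb.D w (L x)) ∧
    (∀ t : ↥(accessibleSpace R), (t : U) = R.tau → Rb.tau = L t) ∧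
    (∀ x : ↥(accessibleSpace R), Rb.pi (L x) = R.pi (x : U))

section Aux

variable {U : Type} [AddCommGroup U] [Module ℝ U]

/-- The map sending `x` to the function `w ↦ π (D(w) x)`. -/
def procMap (R : QuasiRealization M U) : U →ₗ[ℝ] (FreeMonoid M → ℝ) :=
  LinearMap.pi fun w => R.pi ∘ₗ (R.D w : U →ₗ[ℝ] U)

lemma procMap_apply (R : QuasiRealization M U) (x : U) (w : FreeMonoid M) :
    procMap R x w = R.pi (R.D w x) := rfl

lemma accessible_stable (R : QuasiRealization M U) (w : FreeMonoid M) {x : U}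
    (hx : x ∈ accessibleSpace R) : R.D w x ∈ accessibleSpace R := by
  induction hx using Submodule.span_induction with
  | mem y hy =>
    obtain ⟨v, rfl⟩ := hy
    refine Submodule.subset_span ⟨w * v, ?_⟩
    show R.D (w * v) R.tau = R.D w (R.D v R.tau)
    rw [map_mul]; rfl
  | zero => simp
  | add a b _ _ iha ihb => rw [map_add]; exact Submodule.add_mem _ iha ihb
  | smul c a _ iha => rw [map_smul]; exact Submodule.smul_mem _ c iha

lemma tau_mem_accessible (R : QuasiRealization M U) : R.tau ∈ accessibleSpace R :=
  Submodule.subset_span ⟨1, show R.D 1 R.tau = R.tau by rw [map_one]; rfl⟩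

lemma procMap_shift (R : QuasiRealization M U) (u : FreeMonoid M) (x : U)
    (v : FreeMonoid M) : procMap R (R.D u x) v = procMap R x (v * u) := by
  simp only [procMap_apply, map_mul]
  rfl

lemma procMap_one (R : QuasiRealization M U) (x : U) :
    procMap R x 1 = R.pi x := by
  simp [procMap_apply, map_one]

variable {V : Type} [AddCommGroup V] [Module ℝ V]
  {R : QuasiRealization M U} {Rb : QuasiRealization M V}
  {L : ↥(accessibleSpace R) →ₗ[ℝ] V}

lemma procMap_L
    (hD : ∀ (w : FreeMonoid M) (x y : ↥(accessibleSpace R)),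
      (y : U) = R.D w (x : U) → L y = Rb.D w (L x))
    (hpi : ∀ x : ↥(accessibleSpace R), Rb.pi (L x) = R.pi (x : U))
    (t : ↥(accessibleSpace R)) :
    procMap Rb (L t) = procMap R (t : U) := by
  funext w
  have hy : ((⟨R.D w (t : U), accessible_stable R w t.2⟩ :
      ↥(accessibleSpace R)) : U) = R.D w (t : U) := rfl
  rw [procMap_apply, procMap_apply, ← hD w t _ hy, hpi]

lemma procMap_injective
    (hsurj : Function.Surjective L)
    (hker : ∀ x : ↥(accessibleSpace R), L x = 0 ↔ (x : U) ∈ nullSpace R)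
    (hD : ∀ (w : FreeMonoid M) (x y : ↥(accessibleSpace R)),
      (y : U) = R.D w (x : U) → L y = Rb.D w (L x))
    (hpi : ∀ x : ↥(accessibleSpace R), Rb.pi (L x) = R.pi (x : U)) :
    Function.Injective (procMap Rb) := by
  rw [← LinearMap.ker_eq_bot, eq_bot_iff]
  intro x hx
  rw [LinearMap.mem_ker] at hx
  obtain ⟨t, rfl⟩ := hsurj x
  have h0 : ∀ w : FreeMonoid M, R.pi (R.D w (t : U)) = 0 := by
    intro w
    have := congrFun (procMap_L hD hpi t) w
    rw [hx] at this
    simpa [procMap_apply] using this.symm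
  have hmem : (t : U) ∈ nullSpace R := by
    rw [nullSpace, Submodule.mem_dualCoannihilator]
    intro φ hφ
    induction hφ using Submodule.span_induction with
    | mem σ hσ => obtain ⟨w, rfl⟩ := hσ; exact h0 w
    | zero => simp
    | add a b _ _ iha ihb => simp [iha, ihb]
    | smul c a _ iha => simp [iha]
  rw [Submodule.mem_bot]
  exact (hker t).mpr hmem

lemma procMap_range
    (hsurj : Function.Surjective L)
    (hD : ∀ (w : FreeMonoid M) (x y : ↥(accessibleSpace R)),
      (y : U) = R.D w (x : U) → L y = Rb.D w (L x))
    (hpi : ∀ x : ↥(accessibleSpace R), Rb.pi (L x) = R.pi (x : U)) :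
    LinearMap.range (procMap Rb) =
      Submodule.span ℝ (Set.range fun w : FreeMonoid M =>
        (fun v : FreeMonoid M => R.proc (v * w))) := by
  have hLr : LinearMap.range L = ⊤ := LinearMap.range_eq_top.mpr hsurj
  have h1 : LinearMap.range (procMap Rb) =
      LinearMap.range ((procMap Rb) ∘ₗ L) := by
    rw [LinearMap.range_comp, hLr, Submodule.map_top]
  have h2 : (procMap Rb) ∘ₗ L =
      (procMap R) ∘ₗ (accessibleSpace R).subtype := by
    ext t
    exact congrFun (procMap_L hD hpi t) _
  have hfun : (⇑(procMap R) ∘ fun w : FreeMonoid M => R.D w R.tau) =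
      fun w : FreeMonoid M => (fun v : FreeMonoid M => R.proc (v * w)) := by
    funext w v
    show R.pi (R.D v (R.D w R.tau)) = R.pi (R.D (v * w) R.tau)
    rw [map_mul]; rfl
  rw [h1, h2, LinearMap.range_comp, Submodule.range_subtype, accessibleSpace,
    Submodule.map_span, ← Set.range_comp, hfun]

end Aux

/-- two quasi-realizations of the same process have isomorphic quotient
realizations: there is a linear isomorphism `T` with `π̄₁ = π̄₂ ∘ T`,
`D̄₁(u) = T⁻¹ ∘ D̄₂(u) ∘ T` for every letter `u`, and `τ̄₁ = T⁻¹ τ̄₂`. -/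
theorem quotient_realizations_isomorphic
    {U₁ U₂ V₁ V₂ : Type}
    [AddCommGroup U₁] [Module ℝ U₁] [FiniteDimensional ℝ U₁]
    [AddCommGroup U₂] [Module ℝ U₂] [FiniteDimensional ℝ U₂]
    [AddCommGroup V₁] [Module ℝ V₁] [FiniteDimensional ℝ V₁]
    [AddCommGroup V₂] [Module ℝ V₂] [FiniteDimensional ℝ V₂]
    (R₁ : QuasiRealization M U₁) (R₂ : QuasiRealization M U₂)
    (hequiv : ∀ w : FreeMonoid M, R₁.proc w = R₂.proc w)
    (Rb₁ : QuasiRealization M V₁) (Rb₂ : QuasiRealization M V₂)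
    (h₁ : IsQuotientRealization R₁ Rb₁) (h₂ : IsQuotientRealization R₂ Rb₂) :
    ∃ T : V₁ ≃ₗ[ℝ] V₂,
      (∀ x : V₁, Rb₁.pi x = Rb₂.pi (T x)) ∧
      (∀ (u : M) (x : V₁),
        Rb₁.D (FreeMonoid.of u) x = T.symm (Rb₂.D (FreeMonoid.of u) (T x))) ∧
      Rb₁.tau = T.symm Rb₂.tau := by
  obtain ⟨L₁, hsurj₁, hker₁, hD₁, htau₁, hpi₁⟩ := h₁
  obtain ⟨L₂, hsurj₂, hker₂, hD₂, htau₂, hpi₂⟩ := h₂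
  have hinj₁ := procMap_injective hsurj₁ hker₁ hD₁ hpi₁
  have hinj₂ := procMap_injective hsurj₂ hker₂ hD₂ hpi₂
  have hrange : LinearMap.range (procMap Rb₁) = LinearMap.range (procMap Rb₂) := by
    rw [procMap_range hsurj₁ hD₁ hpi₁, procMap_range hsurj₂ hD₂ hpi₂]
    have : (fun w : FreeMonoid M => (fun v : FreeMonoid M => R₁.proc (v * w))) =
        fun w : FreeMonoid M => (fun v : FreeMonoid M => R₂.proc (v * w)) := by
      funext w v; exact hequiv (v * w)
    rw [this]
  let e₁ := LinearEquiv.ofInjective (procMap Rb₁) hinj₁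
  let e₂ := LinearEquiv.ofInjective (procMap Rb₂) hinj₂
  let T : V₁ ≃ₗ[ℝ] V₂ :=
    e₁.trans ((LinearEquiv.ofEq _ _ hrange).trans e₂.symm)
  have hT : ∀ x : V₁, procMap Rb₂ (T x) = procMap Rb₁ x := by
    intro x
    have h := e₂.apply_symm_apply ((LinearEquiv.ofEq _ _ hrange) (e₁ x))
    have h' := congrArg (Subtype.val) h
    simpa [e₁, e₂, T, LinearEquiv.ofInjective_apply] using h'
  refine ⟨T, ?_, ?_, ?_⟩
  · intro x
    rw [← procMap_one Rb₁ x, ← procMap_one Rb₂ (T x), hT]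
  · intro u x
    rw [LinearEquiv.eq_symm_apply]
    apply hinj₂
    funext v
    rw [hT, procMap_shift, procMap_shift, hT]
  · rw [LinearEquiv.eq_symm_apply]
    apply hinj₂
    rw [hT]
    have ht₁ := htau₁ ⟨R₁.tau, tau_mem_accessible R₁⟩ rfl
    have ht₂ := htau₂ ⟨R₂.tau, tau_mem_accessible R₂⟩ rfl
    rw [ht₁, ht₂, procMap_L hD₁ hpi₁, procMap_L hD₂ hpi₂]
    funext w
    exact hequiv w
end

section
/- Let R = (V, π, D, τ) be a regular quasi-realization of a nonnegative process p (i.e., no equivalent quasi-realization of smaller dimension exists). Then every convex cone C ⊆ V satisfying τ ∈ C, D(w)(C) ⊆ C for all w ∈ M*, and π ∈ C* is proper—pointed (C ∩ (−C) = {0}) and generating (span C = V)—and τ is an order unit of C: for every v ∈ V there exists λ > 0 with λτ − v ∈ C. -/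
section Aux

variable {M : Type} [Fintype M] {V : Type} [AddCommGroup V] [Module ℝ V]

/-- Restriction of a quasi-realization to an invariant submodule containing `τ`. -/
noncomputable def QuasiRealization.restrictQR (R : QuasiRealization M V) (W : Submodule ℝ V)
    (hτ : R.tau ∈ W) (hD : ∀ w : FreeMonoid M, ∀ x ∈ W, R.D w x ∈ W) :
    QuasiRealization M W where
  pi := R.pi.domRestrict W
  tau := ⟨R.tau, hτ⟩
  D :=
  { toFun := fun w => (R.D w).restrict (fun x hx => hD w x hx)
    map_one' := by
      refine LinearMap.ext fun x => Subtype.ext ?_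
      simp [LinearMap.restrict_coe_apply]
    map_mul' := fun w₁ w₂ => by
      refine LinearMap.ext fun x => Subtype.ext ?_
      simp [LinearMap.restrict_coe_apply, Module.End.mul_apply] }
  pi_stationary := by
    refine LinearMap.ext fun x => ?_
    have hx : (((∑ u : M, (R.D (FreeMonoid.of u)).restrict
        (fun y hy => hD (FreeMonoid.of u) y hy)) x : W) : V)
        = (∑ u : M, R.D (FreeMonoid.of u)) (x : V) := by
      simp [LinearMap.sum_apply, LinearMap.restrict_coe_apply]
    have h := DFunLike.congr_fun R.pi_stationary (x : V)
    simp only [LinearMap.coe_comp, Function.comp_apply] at h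
    simpa [LinearMap.domRestrict_apply, hx] using h
  tau_stationary := by
    refine Subtype.ext ?_
    have hx : (((∑ u : M, (R.D (FreeMonoid.of u)).restrict
        (fun y hy => hD (FreeMonoid.of u) y hy)) ⟨R.tau, hτ⟩ : W) : V)
        = (∑ u : M, R.D (FreeMonoid.of u)) R.tau := by
      simp [LinearMap.sum_apply, LinearMap.restrict_coe_apply]
    exact hx.trans R.tau_stationary

theorem QuasiRealization.restrictQR_proc (R : QuasiRealization M V) (W : Submodule ℝ V)
    (hτ : R.tau ∈ W) (hD : ∀ w : FreeMonoid M, ∀ x ∈ W, R.D w x ∈ W) (w : FreeMonoid M) :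
    (R.restrictQR W hτ hD).proc w = R.proc w := by
  simp [QuasiRealization.proc, QuasiRealization.restrictQR, LinearMap.restrict_coe_apply]

/-- The quotient of the transition homomorphism by an invariant submodule. -/
noncomputable def quotD (D : FreeMonoid M →* Module.End ℝ V) (L : Submodule ℝ V)
    (hD : ∀ w : FreeMonoid M, ∀ x ∈ L, D w x ∈ L) :
    FreeMonoid M →* Module.End ℝ (V ⧸ L) where
  toFun := fun w => L.mapQ L (D w) (fun x hx => hD w x hx)
  map_one' := by
    refine LinearMap.ext fun x => ?_
    obtain ⟨x, rfl⟩ := Submodule.Quotient.mk_surjective L x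
    simp [Submodule.mapQ_apply]
  map_mul' := fun w₁ w₂ => by
    refine LinearMap.ext fun x => ?_
    obtain ⟨x, rfl⟩ := Submodule.Quotient.mk_surjective L x
    simp [Submodule.mapQ_apply, Module.End.mul_apply]

theorem quotD_sum_mk (D : FreeMonoid M →* Module.End ℝ V) (L : Submodule ℝ V)
    (hD : ∀ w : FreeMonoid M, ∀ x ∈ L, D w x ∈ L) (x : V) :
    (∑ u : M, (quotD D L hD) (FreeMonoid.of u)) (Submodule.Quotient.mk x)
      = Submodule.Quotient.mk ((∑ u : M, D (FreeMonoid.of u)) x) := by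
  simp only [quotD, MonoidHom.coe_mk, OneHom.coe_mk, LinearMap.sum_apply,
    Submodule.mapQ_apply]
  exact (map_sum L.mkQ (fun u => D (FreeMonoid.of u) x) Finset.univ).symm

/-- Quotient of a quasi-realization by an invariant submodule contained in `ker π`. -/
noncomputable def QuasiRealization.quotQR (R : QuasiRealization M V) (L : Submodule ℝ V)
    (hD : ∀ w : FreeMonoid M, ∀ x ∈ L, R.D w x ∈ L) (hπ : L ≤ LinearMap.ker R.pi) :
    QuasiRealization M (V ⧸ L) where
  pi := L.liftQ R.pi hπ
  tau := Submodule.Quotient.mk R.tau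
  D := quotD R.D L hD
  pi_stationary := by
    refine LinearMap.ext fun x => ?_
    obtain ⟨x, rfl⟩ := Submodule.Quotient.mk_surjective L x
    have h := DFunLike.congr_fun R.pi_stationary x
    simp only [LinearMap.coe_comp, Function.comp_apply] at h
    simp only [LinearMap.coe_comp, Function.comp_apply, quotD_sum_mk,
      Submodule.liftQ_apply]
    exact h
  tau_stationary := by
    have e1 := quotD_sum_mk R.D L hD R.tau
    rw [show ((∑ u : M, R.D (FreeMonoid.of u)) R.tau) = R.tau from R.tau_stationary] at e1
    exact e1

theorem QuasiRealization.quotQR_proc (R : QuasiRealization M V) (L : Submodule ℝ V)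
    (hD : ∀ w : FreeMonoid M, ∀ x ∈ L, R.D w x ∈ L) (hπ : L ≤ LinearMap.ker R.pi)
    (w : FreeMonoid M) : (R.quotQR L hD hπ).proc w = R.proc w := by
  simp [QuasiRealization.proc, QuasiRealization.quotQR, quotD, Submodule.mapQ_apply,
    Submodule.liftQ_apply]

end Aux

/-- if `R` is a regular quasi-realization of a nonnegative process
(no equivalent quasi-realization of smaller dimension exists), then every convex cone
`C` with `τ ∈ C`, `D(w)(C) ⊆ C` and `π ∈ C*` is proper (pointed and generating), and
`τ` is an order unit of `C`. -/
theorem regular_realization_stable_cone_proper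
    {M : Type} [Fintype M] {V : Type} [AddCommGroup V] [Module ℝ V]
    [FiniteDimensional ℝ V] (R : QuasiRealization M V)
    (hnonneg : ∀ w : FreeMonoid M, 0 ≤ R.proc w)
    (hregular : ∀ (V' : Type) [AddCommGroup V'] [Module ℝ V'] [FiniteDimensional ℝ V']
      (R' : QuasiRealization M V'), (∀ w, R'.proc w = R.proc w) →
        Module.finrank ℝ V ≤ Module.finrank ℝ V') :
    ∀ C : ConvexCone ℝ V,
      R.tau ∈ C →
      (∀ w : FreeMonoid M, ∀ x ∈ C, R.D w x ∈ C) →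
      (∀ x ∈ C, 0 ≤ R.pi x) →
      -- pointed
      (∀ x : V, x ∈ C → -x ∈ C → x = 0) ∧
      -- generating
      Submodule.span ℝ (C : Set V) = ⊤ ∧
      -- τ is an order unit of C
      (∀ v : V, ∃ lam : ℝ, 0 < lam ∧ lam • R.tau - v ∈ C) := by
  intro C hC₁ hC₂ hC₃
  classical
  -- the cone with the origin added
  set Q : V → Prop := fun y => y = 0 ∨ y ∈ C with hQdef
  have Qzero : Q 0 := Or.inl rfl
  have Qadd : ∀ {a b : V}, Q a → Q b → Q (a + b) := by
    rintro a b (rfl | ha) (rfl | hb)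
    · simpa using Qzero
    · simpa using Or.inr hb
    · simpa using Or.inr ha
    · exact Or.inr (C.add_mem ha hb)
  have Qsmul : ∀ {c : ℝ}, 0 < c → ∀ {a : V}, Q a → Q (c • a) := by
    rintro c hc a (rfl | ha)
    · simpa using Qzero
    · exact Or.inr (C.smul_mem hc ha)
  have QD : ∀ (w : FreeMonoid M) {a : V}, Q a → Q (R.D w a) := by
    rintro w a (rfl | ha)
    · simpa using Qzero
    · exact Or.inr (hC₂ w a ha)
  -- Part 1: pointedness, via the quotient realization
  have pointed : ∀ x : V, x ∈ C → -x ∈ C → x = 0 := by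
    intro x hx hnx
    -- the lineality space
    set L : Submodule ℝ V :=
      { carrier := {y | y = 0 ∨ (y ∈ C ∧ -y ∈ C)}
        add_mem' := by
          rintro a b (rfl | ⟨ha₁, ha₂⟩) (rfl | ⟨hb₁, hb₂⟩)
          · simp
          · simpa using Or.inr ⟨hb₁, hb₂⟩
          · simpa using Or.inr ⟨ha₁, ha₂⟩
          · exact Or.inr ⟨C.add_mem ha₁ hb₁, by
              rw [neg_add]; exact C.add_mem ha₂ hb₂⟩
        zero_mem' := Or.inl rfl
        smul_mem' := by
          rintro c a (rfl | ⟨ha₁, ha₂⟩)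
          · simp
          · rcases lt_trichotomy c 0 with hc | rfl | hc
            · refine Or.inr ⟨?_, ?_⟩
              · have := C.smul_mem (neg_pos.2 hc) ha₂
                rwa [smul_neg, neg_smul, neg_neg] at this
              · have := C.smul_mem (neg_pos.2 hc) ha₁
                rwa [neg_smul] at this
            · simp
            · exact Or.inr ⟨C.smul_mem hc ha₁, by
                rw [← smul_neg]; exact C.smul_mem hc ha₂⟩ } with hLdef
    have hmemL : ∀ y : V, y ∈ L ↔ y = 0 ∨ (y ∈ C ∧ -y ∈ C) := fun y => Iff.rfl
    have hDL : ∀ w : FreeMonoid M, ∀ y ∈ L, R.D w y ∈ L := by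
      intro w y hy
      rcases (hmemL y).1 hy with rfl | ⟨hy₁, hy₂⟩
      · simp [hmemL]
      · refine (hmemL _).2 (Or.inr ⟨hC₂ w y hy₁, ?_⟩)
        have := hC₂ w (-y) hy₂
        rwa [map_neg] at this
    have hπL : L ≤ LinearMap.ker R.pi := by
      intro y hy
      rcases (hmemL y).1 hy with rfl | ⟨hy₁, hy₂⟩
      · simp
      · have h1 := hC₃ y hy₁
        have h2 := hC₃ (-y) hy₂
        rw [map_neg] at h2
        simp only [LinearMap.mem_ker]
        linarith
    have hle := hregular (V ⧸ L) (R.quotQR L hDL hπL) (R.quotQR_proc L hDL hπL)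
    have hsum := Submodule.finrank_quotient_add_finrank L
    have hL0 : Module.finrank ℝ L = 0 := by omega
    have hLbot : L = ⊥ := Submodule.finrank_eq_zero.1 hL0
    have : x ∈ L := (hmemL x).2 (Or.inr ⟨hx, hnx⟩)
    rw [hLbot] at this
    simpa using this
  -- key lemma: τ - D(w) τ ∈ C ∪ {0}
  have hτsum : ∑ u : M, R.D (FreeMonoid.of u) R.tau = R.tau := by
    have := R.tau_stationary
    rwa [LinearMap.sum_apply] at this
  have key : ∀ w : FreeMonoid M, Q (R.tau - R.D w R.tau) := by
    intro w
    induction w using FreeMonoid.inductionOn' with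
    | one => simp [Qzero]
    | of_mul u w ih =>
      have e : R.D (FreeMonoid.of u) R.tau
            + ∑ u' ∈ Finset.univ.erase u, R.D (FreeMonoid.of u') R.tau = R.tau := by
        exact (Finset.add_sum_erase Finset.univ
          (fun u' => R.D (FreeMonoid.of u') R.tau) (Finset.mem_univ u)).trans hτsum
      have key_eq : R.tau - R.D (FreeMonoid.of u * w) R.tau
          = R.D (FreeMonoid.of u) (R.tau - R.D w R.tau)
            + ∑ u' ∈ Finset.univ.erase u, R.D (FreeMonoid.of u') R.tau := by
        nth_rewrite 1 [← e]
        rw [map_sub, map_mul, Module.End.mul_apply]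
        abel
      rw [key_eq]
      refine Qadd (QD _ ih) ?_
      refine Finset.sum_induction _ Q (fun a b ha hb => Qadd ha hb) Qzero ?_
      intro u' _
      exact Or.inr (hC₂ _ _ hC₁)
  -- the face generated by τ and its span
  set F : Set V := {y | y ∈ C ∧ ∃ l : ℝ, 0 < l ∧ Q (l • R.tau - y)} with hFdef
  have hτF : R.tau ∈ F := ⟨hC₁, 1, one_pos, by rw [one_smul, sub_self]; exact Qzero⟩
  have hDF : ∀ w : FreeMonoid M, ∀ y ∈ F, R.D w y ∈ F := by
    rintro w y ⟨hy, l, hl, hQ⟩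
    refine ⟨hC₂ w y hy, l, hl, ?_⟩
    have e : l • R.tau - R.D w y
        = l • (R.tau - R.D w R.tau) + R.D w (l • R.tau - y) := by
      rw [map_sub, map_smul, smul_sub]
      abel
    rw [e]
    exact Qadd (Qsmul hl (key w)) (QD w hQ)
  set W : Submodule ℝ V := Submodule.span ℝ F with hWdef
  have hτW : R.tau ∈ W := Submodule.subset_span hτF
  have hDW : ∀ w : FreeMonoid M, ∀ y ∈ W, R.D w y ∈ W := by
    intro w y hy
    have hmap : Submodule.map (R.D w) W ≤ W := by
      rw [hWdef, Submodule.map_span]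
      refine Submodule.span_le.2 ?_
      rintro _ ⟨z, hz, rfl⟩
      exact Submodule.subset_span (hDF w z hz)
    exact hmap (Submodule.mem_map_of_mem hy)
  have hle := hregular W (R.restrictQR W hτW hDW) (R.restrictQR_proc W hτW hDW)
  have hWtop : W = ⊤ :=
    Submodule.eq_top_of_finrank_eq (le_antisymm (Submodule.finrank_le W) hle)
  -- order unit property
  have hscale : ∀ a : ℝ, 0 < a → ∀ v : V,
      (∃ l : ℝ, 0 < l ∧ l • R.tau - v ∈ C) → ∃ l : ℝ, 0 < l ∧ l • R.tau - a • v ∈ C := by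
    rintro a ha v ⟨l, hl, hc⟩
    refine ⟨a * l, mul_pos ha hl, ?_⟩
    have e : (a * l) • R.tau - a • v = a • (l • R.tau - v) := by
      rw [smul_sub, mul_smul]
    rw [e]
    exact C.smul_mem ha hc
  have orderunit : ∀ v : V, ∃ lam : ℝ, 0 < lam ∧ lam • R.tau - v ∈ C := by
    have main : ∀ v : V, v ∈ W →
        (∃ l : ℝ, 0 < l ∧ l • R.tau - v ∈ C) ∧
        (∃ l : ℝ, 0 < l ∧ l • R.tau - (-v) ∈ C) := by
      intro v hv
      induction hv using Submodule.span_induction with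
      | mem y hy =>
        obtain ⟨hyC, l, hl, hQ⟩ := hy
        constructor
        · refine ⟨2 * l, by positivity, ?_⟩
          have e : (2 * l) • R.tau - y = l • R.tau + (l • R.tau - y) := by
            rw [two_mul, add_smul]; abel
          rw [e]
          rcases hQ with h0 | hc
          · rw [h0, add_zero]; exact C.smul_mem hl hC₁
          · exact C.add_mem (C.smul_mem hl hC₁) hc
        · refine ⟨l, hl, ?_⟩
          rw [sub_neg_eq_add]
          exact C.add_mem (C.smul_mem hl hC₁) hyC
      | zero =>
        refine ⟨⟨1, one_pos, ?_⟩, ⟨1, one_pos, ?_⟩⟩ <;>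
          simpa using C.smul_mem one_pos hC₁
      | add y z _ _ hy hz =>
        obtain ⟨⟨l₁, hl₁, hc₁⟩, ⟨l₁', hl₁', hc₁'⟩⟩ := hy
        obtain ⟨⟨l₂, hl₂, hc₂⟩, ⟨l₂', hl₂', hc₂'⟩⟩ := hz
        constructor
        · refine ⟨l₁ + l₂, by positivity, ?_⟩
          have e : (l₁ + l₂) • R.tau - (y + z)
              = (l₁ • R.tau - y) + (l₂ • R.tau - z) := by
            rw [add_smul]; abel
          rw [e]; exact C.add_mem hc₁ hc₂
        · refine ⟨l₁' + l₂', by positivity, ?_⟩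
          have e : (l₁' + l₂') • R.tau - (-(y + z))
              = (l₁' • R.tau - (-y)) + (l₂' • R.tau - (-z)) := by
            rw [add_smul]; abel
          rw [e]; exact C.add_mem hc₁' hc₂'
      | smul a y _ hy =>
        obtain ⟨⟨l, hl, hc⟩, ⟨l', hl', hc'⟩⟩ := hy
        rcases lt_trichotomy a 0 with ha | rfl | ha
        · constructor
          · have := hscale (-a) (by linarith) (-y) ⟨l', hl', hc'⟩
            simpa [neg_smul, smul_neg] using this
          · have := hscale (-a) (by linarith) y ⟨l, hl, hc⟩
            simpa [neg_smul] using this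
        · constructor <;>
            · refine ⟨1, one_pos, ?_⟩
              simpa using C.smul_mem one_pos hC₁
        · constructor
          · exact hscale a ha y ⟨l, hl, hc⟩
          · have := hscale a ha (-y) ⟨l', hl', hc'⟩
            simpa [smul_neg] using this
    intro v
    exact (main v (hWtop ▸ Submodule.mem_top)).1
  refine ⟨pointed, ?_, orderunit⟩
  -- generating
  rw [eq_top_iff, ← hWtop, hWdef]
  exact Submodule.span_mono (fun y hy => hy.1)
end

section
/- For any quasi-realization of a process p, the quotient realization is a regular realization: its dimension equals the order of p, the minimal dimension over all quasi-realizations of p. Consequently, every regular quasi-realization of p arises as the quotient realization of any equivalent quasi-realization. -/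
variable {M : Type} [Fintype M]

/-- The "observation map" `Φ : U → (M* → ℝ)`, `Φ(v)(u) = π(D(u) v)`. -/
def obsMap {U : Type} [AddCommGroup U] [Module ℝ U]
    (R : QuasiRealization M U) : U →ₗ[ℝ] (FreeMonoid M → ℝ) :=
  LinearMap.pi fun u => R.pi ∘ₗ (R.D u : U →ₗ[ℝ] U)

lemma obsMap_apply {U : Type} [AddCommGroup U] [Module ℝ U]
    (R : QuasiRealization M U) (v : U) (u : FreeMonoid M) :
    obsMap R v u = R.pi (R.D u v) := rfl

lemma obsMap_D {U : Type} [AddCommGroup U] [Module ℝ U]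
    (R : QuasiRealization M U) (w : FreeMonoid M) (v : U) :
    obsMap R (R.D w v) = fun u => obsMap R v (u * w) := by
  funext u
  show R.pi (R.D u (R.D w v)) = R.pi (R.D (u * w) v)
  rw [map_mul]
  rfl

lemma obsMap_one {U : Type} [AddCommGroup U] [Module ℝ U]
    (R : QuasiRealization M U) (v : U) :
    obsMap R v 1 = R.pi v := by
  simp [obsMap_apply, map_one]

lemma mem_nullSpace_iff {U : Type} [AddCommGroup U] [Module ℝ U]
    (R : QuasiRealization M U) (v : U) :
    v ∈ nullSpace R ↔ obsMap R v = 0 := by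
  rw [nullSpace, Submodule.mem_dualCoannihilator]
  constructor
  · intro hv
    funext u
    exact hv _ (Submodule.subset_span ⟨u, rfl⟩)
  · intro hv φ hφ
    rw [observableSpace] at hφ
    induction hφ using Submodule.span_induction with
    | mem f hf =>
      obtain ⟨u, rfl⟩ := hf
      simpa [obsMap_apply] using congrFun hv u
    | zero => simp
    | add f g _ _ hf hg => simp [hf, hg]
    | smul c f _ hf => simp [hf]

lemma map_accessible {U : Type} [AddCommGroup U] [Module ℝ U]
    (R : QuasiRealization M U) :
    (accessibleSpace R).map (obsMap R) =
      Submodule.span ℝ (Set.range fun w : FreeMonoid M =>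
        (fun u => R.proc (u * w) : FreeMonoid M → ℝ)) := by
  rw [accessibleSpace, Submodule.map_span, ← Set.range_comp]
  have : (⇑(obsMap R) ∘ fun w => R.D w R.tau)
      = fun w => (fun u => R.proc (u * w) : FreeMonoid M → ℝ) := by
    funext w u
    show R.pi (R.D u (R.D w R.tau)) = R.pi (R.D (u * w) R.tau)
    rw [map_mul]
    rfl
  rw [this]


/-- the quotient realization of any quasi-realization is regular: its
dimension is minimal among all (finite-dimensional) quasi-realizations of the same
process.  Consequently every regular quasi-realization of the process arises as the
quotient realization of any equivalent quasi-realization. -/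
theorem quotient_realization_is_regular
    {U Vb : Type}
    [AddCommGroup U] [Module ℝ U] [FiniteDimensional ℝ U]
    [AddCommGroup Vb] [Module ℝ Vb] [FiniteDimensional ℝ Vb]
    (R : QuasiRealization M U) (Rb : QuasiRealization M Vb)
    (h : IsQuotientRealization R Rb) :
    -- the quotient realization has the minimal dimension (the order of p)
    (∀ (V' : Type) [AddCommGroup V'] [Module ℝ V'] [FiniteDimensional ℝ V']
      (R' : QuasiRealization M V'), (∀ w, R'.proc w = R.proc w) →
        Module.finrank ℝ Vb ≤ Module.finrank ℝ V') ∧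
    -- every regular quasi-realization of the process is a quotient realization of R
    (∀ (V' : Type) [AddCommGroup V'] [Module ℝ V'] [FiniteDimensional ℝ V']
      (R' : QuasiRealization M V'), (∀ w, R'.proc w = R.proc w) →
        (∀ (V'' : Type) [AddCommGroup V''] [Module ℝ V''] [FiniteDimensional ℝ V'']
          (R'' : QuasiRealization M V''), (∀ w, R''.proc w = R.proc w) →
            Module.finrank ℝ V' ≤ Module.finrank ℝ V'') →
        IsQuotientRealization R R') := by
  obtain ⟨L, hLsurj, hLker, hLD, hLtau, hLpi⟩ := h
  -- basic membership facts
  have hτmem : R.tau ∈ accessibleSpace R :=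
    Submodule.subset_span ⟨1, by simp⟩
  have hwmem : ∀ w : FreeMonoid M, R.D w R.tau ∈ accessibleSpace R :=
    fun w => Submodule.subset_span ⟨w, rfl⟩
  -- the quotient realization generates the same process
  have hprocRb : ∀ w, Rb.proc w = R.proc w := by
    intro w
    have h1 : Rb.tau = L ⟨R.tau, hτmem⟩ := hLtau _ rfl
    have h2 : L ⟨R.D w R.tau, hwmem w⟩ = Rb.D w (L ⟨R.tau, hτmem⟩) := hLD w _ _ rfl
    unfold QuasiRealization.proc
    rw [h1, ← h2, hLpi]
  -- the restricted observation map
  set ΦW : ↥(accessibleSpace R) →ₗ[ℝ] (FreeMonoid M → ℝ) :=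
    (obsMap R) ∘ₗ (accessibleSpace R).subtype with hΦW
  have hΦWapp : ∀ x : ↥(accessibleSpace R), ΦW x = obsMap R (x : U) := fun _ => rfl
  have hkerEq : LinearMap.ker L = LinearMap.ker ΦW := by
    ext x
    rw [LinearMap.mem_ker, LinearMap.mem_ker, hLker, mem_nullSpace_iff, hΦWapp]
  have hrangeΦW : LinearMap.range ΦW = (accessibleSpace R).map (obsMap R) := by
    rw [hΦW, LinearMap.range_comp, Submodule.range_subtype]
  -- finrank Vb = finrank (hankel space)
  have hfinVb : Module.finrank ℝ Vb
      = Module.finrank ℝ ↥((accessibleSpace R).map (obsMap R)) := by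
    have e1 := LinearMap.finrank_range_add_finrank_ker L
    have e2 := LinearMap.finrank_range_add_finrank_ker ΦW
    rw [LinearMap.range_eq_top.mpr hLsurj, finrank_top] at e1
    rw [hkerEq] at e1
    rw [hrangeΦW] at e2
    omega
  -- hankel spaces agree for equivalent realizations
  have hhankel : ∀ (V' : Type) [AddCommGroup V'] [Module ℝ V']
      (R' : QuasiRealization M V'), (∀ w, R'.proc w = R.proc w) →
      (accessibleSpace R').map (obsMap R') = (accessibleSpace R).map (obsMap R) := by
    intro V' _ _ R' hp
    rw [map_accessible, map_accessible]
    have : (fun w => (fun u => R'.proc (u * w) : FreeMonoid M → ℝ))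
        = fun w => (fun u => R.proc (u * w) : FreeMonoid M → ℝ) := by
      funext w u
      rw [hp]
    rw [this]
  -- Part 1
  have part1 : ∀ (V' : Type) [AddCommGroup V'] [Module ℝ V'] [FiniteDimensional ℝ V']
      (R' : QuasiRealization M V'), (∀ w, R'.proc w = R.proc w) →
        Module.finrank ℝ Vb ≤ Module.finrank ℝ V' := by
    intro V' _ _ _ R' hp
    rw [hfinVb, ← hhankel V' R' hp]
    exact le_trans (Submodule.finrank_map_le _ _) (Submodule.finrank_le _)
  refine ⟨part1, ?_⟩
  -- Part 2
  intro V' _ _ _ R' hp hmin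
  set Ψ : V' →ₗ[ℝ] (FreeMonoid M → ℝ) := obsMap R' with hΨ
  have hVb' : Module.finrank ℝ V' ≤ Module.finrank ℝ Vb := hmin Vb Rb hprocRb
  have hle : (accessibleSpace R).map (obsMap R) ≤ LinearMap.range Ψ := by
    rw [← hhankel V' R' hp]
    exact LinearMap.map_le_range
  haveI : Module.Finite ℝ ↥(LinearMap.range Ψ) := Module.Finite.range Ψ
  have hrle : Module.finrank ℝ ↥(LinearMap.range Ψ) ≤ Module.finrank ℝ V' := by
    have e := LinearMap.finrank_range_add_finrank_ker Ψ
    omega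
  have hge : Module.finrank ℝ V'
      ≤ Module.finrank ℝ ↥((accessibleSpace R).map (obsMap R)) := hfinVb ▸ hVb'
  have hmono : Module.finrank ℝ ↥((accessibleSpace R).map (obsMap R))
      ≤ Module.finrank ℝ ↥(LinearMap.range Ψ) := by
    haveI : Module.Finite ℝ ↥((accessibleSpace R).map (obsMap R)) := by
      rw [← hrangeΦW]; exact Module.Finite.range ΦW
    exact Submodule.finrank_mono hle
  -- Ψ is injective
  have hrΨ : Module.finrank ℝ ↥(LinearMap.range Ψ) = Module.finrank ℝ V' :=
    le_antisymm hrle (hge.trans hmono)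
  have hinj : Function.Injective Ψ := by
    rw [← LinearMap.ker_eq_bot]
    have e := LinearMap.finrank_range_add_finrank_ker Ψ
    rw [hrΨ] at e
    have : Module.finrank ℝ ↥(LinearMap.ker Ψ) = 0 := by omega
    exact Submodule.finrank_eq_zero.mp this
  -- range Ψ equals the hankel space
  have hrangeEq : (accessibleSpace R).map (obsMap R) = LinearMap.range Ψ :=
    Submodule.eq_of_le_of_finrank_le hle (hrΨ ▸ hge)
  -- construct L' : W → V'
  have hmem : ∀ x : ↥(accessibleSpace R), ΦW x ∈ LinearMap.range Ψ := by
    intro x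
    apply hle
    rw [← hrangeΦW]
    exact LinearMap.mem_range_self _ x
  set e : V' ≃ₗ[ℝ] ↥(LinearMap.range Ψ) := LinearEquiv.ofInjective Ψ hinj with he
  set L' : ↥(accessibleSpace R) →ₗ[ℝ] V' :=
    e.symm.toLinearMap ∘ₗ (ΦW.codRestrict (LinearMap.range Ψ) hmem) with hL'
  have key : ∀ x : ↥(accessibleSpace R), Ψ (L' x) = ΦW x := by
    intro x
    have : e (L' x) = ΦW.codRestrict (LinearMap.range Ψ) hmem x := by
      rw [hL']
      simp
    have h2 : ((e (L' x) : ↥(LinearMap.range Ψ)) : FreeMonoid M → ℝ) = ΦW x := by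
      rw [this]; rfl
    rw [← h2, he]
    rfl
  refine ⟨L', ?_, ?_, ?_, ?_, ?_⟩
  · -- surjective
    intro v
    have : Ψ v ∈ (accessibleSpace R).map (obsMap R) := by
      rw [hrangeEq]; exact LinearMap.mem_range_self _ v
    obtain ⟨x, hx, hxv⟩ := this
    refine ⟨⟨x, hx⟩, hinj ?_⟩
    rw [key ⟨x, hx⟩, hΦWapp]
    exact hxv
  · -- kernel
    intro x
    rw [mem_nullSpace_iff, ← hΦWapp, ← key x]
    constructor
    · intro hx; rw [hx, map_zero]
    · intro hx
      apply hinj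
      rw [hx, map_zero]
  · -- intertwining
    intro w x y hy
    apply hinj
    have h1 : Ψ (R'.D w (L' x)) = fun u => Ψ (L' x) (u * w) := obsMap_D R' w (L' x)
    rw [key y, h1]
    simp only [key x, hΦWapp]
    rw [hy, obsMap_D]
  · -- tau
    intro t ht
    apply hinj
    rw [key t, hΦWapp, ht]
    funext u
    rw [hΨ, obsMap_apply, obsMap_apply]
    exact hp u
  · -- pi
    intro x
    have := congrFun (key x) 1
    rw [hΨ, obsMap_one] at this
    rw [this, hΦWapp, obsMap_one]
end

section
/- Let H be a finite-dimensional Hilbert space, W ⊆ B(H)^sa a subspace containing the identity, and W̃ ⊆ (B(H)^sa)* a subspace. Then the spaces (W/(W ∩ W̃^⊥))* and (W̃ + W^⊥)/W^⊥ are naturally isomorphic. If moreover W = span(W⁺) and (W ∩ W̃^⊥) ∩ S⁺ = {0}, then: (1) the cone C = L(W⁺), the image of W⁺ under the quotient map L : W → W/(W ∩ W̃^⊥), is a proper SDR cone; (2) under the natural isomorphism, the dual cone of C equals (W̃ + W^⊥)⁺/W^⊥, the image under the quotient by W^⊥ of the positive semidefinite functionals contained in W̃ + W^⊥. -/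
open Matrix
open scoped ComplexOrder

/-- A semidefinite representable (SDR) cone in a real vector space `V`: the image of
the positive semidefinite elements of a subspace of Hermitian matrices under a linear
map into `V`. -/
def IsSDRCone {V : Type} [AddCommGroup V] [Module ℝ V] (C : Set V) : Prop :=
  ∃ (d : ℕ) (Wd : Submodule ℝ (Mat d)) (_ : ∀ A ∈ Wd, A.IsHermitian)
    (Lm : ↥Wd →ₗ[ℝ] V),
    C = {v | ∃ x : ↥Wd, ((x : Mat d)).PosSemidef ∧ v = Lm x}

lemma conjT_real_smul {n : ℕ} (c : ℝ) (A : Mat n) : (c • A)ᴴ = c • Aᴴ := by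
  ext i j
  simp [conjTranspose_apply, Complex.real_smul, Complex.conj_ofReal]

lemma psd_neg_eq_zero {n : ℕ} {A : Mat n} (h1 : A.PosSemidef) (h2 : (-A).PosSemidef) :
    A = 0 := by
  have hmv : ∀ v : Fin n → ℂ, A *ᵥ v = 0 := by
    intro v
    rw [← h1.dotProduct_mulVec_zero_iff]
    have ha := h1.dotProduct_mulVec_nonneg v
    have hb := h2.dotProduct_mulVec_nonneg v
    rw [neg_mulVec, dotProduct_neg, neg_nonneg] at hb
    exact le_antisymm hb ha
  ext i j
  have := congrFun (hmv (Pi.single j 1)) i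
  rwa [mulVec_single_one] at this

lemma psd_real_smul {n : ℕ} {A : Mat n} (hA : A.PosSemidef) {c : ℝ} (hc : 0 ≤ c) :
    (c • A).PosSemidef := by
  refine PosSemidef.of_dotProduct_mulVec_nonneg ?_ (fun v => ?_)
  · show (c • A)ᴴ = c • A
    rw [conjT_real_smul, hA.1]
  · have h1 : (c • A) *ᵥ v = c • (A *ᵥ v) := smul_mulVec c A v
    rw [h1, dotProduct_smul]
    have h2 := hA.dotProduct_mulVec_nonneg v
    show 0 ≤ c • (star v ⬝ᵥ A *ᵥ v)
    have hcs : (c : ℝ) • (star v ⬝ᵥ A *ᵥ v) = (c : ℂ) * (star v ⬝ᵥ A *ᵥ v) := by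
      rw [Complex.real_smul]
    rw [hcs]
    exact mul_nonneg (Complex.zero_le_real.mpr hc) h2

lemma exists_smul_one_add_psd {n : ℕ} {y : Mat n} (hy : y.IsHermitian) :
    ∃ c : ℝ, (c • (1 : Mat n) + y).PosSemidef := by
  classical
  set U : Mat n := (hy.eigenvectorUnitary : Mat n) with hU
  have hUU : U * star U = 1 := (Matrix.mem_unitaryGroup_iff).mp hy.eigenvectorUnitary.2
  refine ⟨∑ i, |hy.eigenvalues i|, ?_⟩
  set c : ℝ := ∑ i, |hy.eigenvalues i| with hc
  have h1 : c • (1 : Mat n) = U * (c • 1) * star U := by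
    rw [Matrix.mul_smul, Matrix.smul_mul, mul_one, hUU]
  have h2 : c • (1 : Mat n) + y
      = U * (c • 1 + diagonal (RCLike.ofReal ∘ hy.eigenvalues)) * star U := by
    rw [Matrix.mul_add, Matrix.add_mul, ← h1]
    congr 1
    exact hy.spectral_theorem
  rw [h2]
  have hdiag : (c • (1 : Mat n)) + diagonal (RCLike.ofReal ∘ hy.eigenvalues)
      = diagonal (fun i => (RCLike.ofReal (c + hy.eigenvalues i) : ℂ)) := by
    ext i j
    rcases eq_or_ne i j with rfl | hij
    · simp only [Matrix.add_apply, Matrix.smul_apply, Matrix.one_apply_eq, diagonal_apply_eq,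
        Function.comp_apply]
      rw [RCLike.ofReal_add, RCLike.real_smul_eq_coe_mul, mul_one]
    · simp [Matrix.add_apply, Matrix.smul_apply, Matrix.one_apply_ne hij, diagonal_apply_ne _ hij]
  rw [hdiag]
  have hd : Matrix.PosSemidef
      (diagonal (fun i => (RCLike.ofReal (c + hy.eigenvalues i) : ℂ)) : Mat n) := by
    apply Matrix.PosSemidef.diagonal
    intro i
    simp only [Pi.zero_apply]
    rw [show ((RCLike.ofReal : ℝ → ℂ) (c + hy.eigenvalues i))
        = ((c + hy.eigenvalues i : ℝ) : ℂ) from rfl, Complex.zero_le_real]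
    have h1 : |hy.eigenvalues i| ≤ c := by
      rw [hc]
      exact Finset.single_le_sum (f := fun j => |hy.eigenvalues j|)
        (fun j _ => abs_nonneg _) (Finset.mem_univ i)
    have := neg_abs_le (hy.eigenvalues i)
    linarith
  have := hd.mul_mul_conjTranspose_same U
  rwa [← Matrix.star_eq_conjTranspose] at this


lemma descend_surj {M N P : Type*} [AddCommGroup M] [AddCommGroup N] [AddCommGroup P]
    [Module ℝ M] [Module ℝ N] [Module ℝ P] (L : M →ₗ[ℝ] N) (hL : Function.Surjective L)
    (F : M →ₗ[ℝ] P) (h : ∀ x, L x = 0 → F x = 0) :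
    ∃ G : N →ₗ[ℝ] P, ∀ x, G (L x) = F x := by
  have h' : LinearMap.ker L ≤ LinearMap.ker F := fun x hx => by
    rw [LinearMap.mem_ker] at hx ⊢; exact h x hx
  refine ⟨((LinearMap.ker L).liftQ F h').comp
    (L.quotKerEquivOfSurjective hL).symm.toLinearMap, fun x => ?_⟩
  have hs : (L.quotKerEquivOfSurjective hL).symm (L x) = Submodule.Quotient.mk x := by
    rw [show L x = (L.quotKerEquivOfSurjective hL) (Submodule.Quotient.mk x) from rfl,
      LinearEquiv.symm_apply_apply]
  rw [LinearMap.comp_apply, LinearEquiv.coe_coe, hs, Submodule.liftQ_apply]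

noncomputable def hermSub (n : ℕ) : Submodule ℝ (Mat n) where
  carrier := {A | A.IsHermitian}
  add_mem' := fun ha hb => ha.add hb
  zero_mem' := Matrix.isHermitian_zero
  smul_mem' := fun c A hA => by
    show (c • A)ᴴ = c • A
    rw [conjT_real_smul]
    exact congrArg _ hA

noncomputable def psdCone (n : ℕ) : ConvexCone ℝ ↥(hermSub n) where
  carrier := {x | ((x : Mat n)).PosSemidef}
  smul_mem' := fun c hc x hx => by
    show (((c • x : ↥(hermSub n)) : Mat n)).PosSemidef
    rw [Submodule.coe_smul]
    exact psd_real_smul hx hc.le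
  add_mem' := fun x hx y hy => by
    show (((x + y : ↥(hermSub n)) : Mat n)).PosSemidef
    rw [Submodule.coe_add]
    exact hx.add hy

noncomputable def reherm (n : ℕ) : Mat n →ₗ[ℝ] ↥(hermSub n) where
  toFun A := ⟨(2⁻¹ : ℝ) • (A + Aᴴ), by
    show ((2⁻¹ : ℝ) • (A + Aᴴ))ᴴ = (2⁻¹ : ℝ) • (A + Aᴴ)
    rw [conjT_real_smul, conjTranspose_add, conjTranspose_conjTranspose, add_comm]⟩
  map_add' A B := by
    apply Subtype.ext
    show (2⁻¹ : ℝ) • (A + B + (A + B)ᴴ) = (2⁻¹ : ℝ) • (A + Aᴴ) + (2⁻¹ : ℝ) • (B + Bᴴ)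
    rw [conjTranspose_add]
    module
  map_smul' c A := by
    apply Subtype.ext
    show (2⁻¹ : ℝ) • (c • A + (c • A)ᴴ) = c • ((2⁻¹ : ℝ) • (A + Aᴴ))
    rw [conjT_real_smul]
    module

lemma reherm_herm {n : ℕ} (A : Mat n) (hA : A.IsHermitian) : reherm n A = ⟨A, hA⟩ := by
  apply Subtype.ext
  show (2⁻¹ : ℝ) • (A + Aᴴ) = A
  rw [show Aᴴ = A from hA, ← two_smul ℝ A, smul_smul]
  norm_num

lemma exists_pos_ext {n : ℕ} (W : Submodule ℝ (Mat n)) (hherm : ∀ A ∈ W, A.IsHermitian)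
    (hI : (1 : Mat n) ∈ W) (φ : ↥W →ₗ[ℝ] ℝ)
    (hφ : ∀ x : ↥W, ((x : Mat n)).PosSemidef → 0 ≤ φ x) :
    ∃ g : Module.Dual ℝ (Mat n), (∀ P : Mat n, P.PosSemidef → 0 ≤ g P) ∧
      ∀ x : ↥W, g (x : Mat n) = φ x := by
  classical
  have hι : ∀ x : ↥(W.comap (hermSub n).subtype), (((x : ↥(hermSub n)) : Mat n)) ∈ W :=
    fun x => x.2
  obtain ⟨ι, hιdef⟩ : ∃ ι : ↥(W.comap (hermSub n).subtype) →ₗ[ℝ] ↥W,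
      ∀ x, (ι x : Mat n) = ((x : ↥(hermSub n)) : Mat n) :=
    ⟨{ toFun := fun x => ⟨((x : ↥(hermSub n)) : Mat n), hι x⟩
       map_add' := fun _ _ => rfl
       map_smul' := fun _ _ => rfl }, fun _ => rfl⟩
  have nonneg : ∀ x : (⟨W.comap (hermSub n).subtype, φ.comp ι⟩ :
      ↥(hermSub n) →ₗ.[ℝ] ℝ).domain,
      (x : ↥(hermSub n)) ∈ psdCone n →
        0 ≤ (⟨W.comap (hermSub n).subtype, φ.comp ι⟩ : ↥(hermSub n) →ₗ.[ℝ] ℝ) x := by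
    intro x hx
    have : ((ι x : ↥W) : Mat n).PosSemidef := by rw [hιdef]; exact hx
    exact hφ (ι x) this
  have dense : ∀ y : ↥(hermSub n), ∃ x : (⟨W.comap (hermSub n).subtype, φ.comp ι⟩ :
      ↥(hermSub n) →ₗ.[ℝ] ℝ).domain, (x : ↥(hermSub n)) + y ∈ psdCone n := by
    intro y
    obtain ⟨c, hc⟩ := exists_smul_one_add_psd y.2
    have h1 : (c • (1 : Mat n)) ∈ hermSub n := by
      show (c • (1 : Mat n))ᴴ = c • 1
      rw [conjT_real_smul, conjTranspose_one]
    refine ⟨⟨⟨c • (1 : Mat n), h1⟩, W.smul_mem c hI⟩, ?_⟩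
    show (((⟨c • (1 : Mat n), h1⟩ + y : ↥(hermSub n)) : Mat n)).PosSemidef
    rw [Submodule.coe_add]
    exact hc
  obtain ⟨g0, hg0_eq, hg0_pos⟩ := riesz_extension ((psdCone n).toPointedCone
      (show ((0 : ↥(hermSub n)) : Mat n).PosSemidef from PosSemidef.zero))
    ⟨W.comap (hermSub n).subtype, φ.comp ι⟩ nonneg dense
  refine ⟨g0.comp (reherm n), ?_, ?_⟩
  · intro P hP
    rw [LinearMap.comp_apply, reherm_herm P hP.1]
    exact hg0_pos ⟨P, hP.1⟩ hP
  · intro x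
    have hxh := hherm (x : Mat n) x.2
    rw [LinearMap.comp_apply, reherm_herm _ hxh]
    have h2 := hg0_eq ⟨⟨(x : Mat n), hxh⟩, x.2⟩
    rw [h2]
    show φ (ι ⟨⟨(x : Mat n), hxh⟩, x.2⟩) = φ x
    congr 1
    apply Subtype.ext
    rw [hιdef]


/-- let `W ⊆ B(H)ˢᵃ` be a subspace containing the identity and
`W̃ ⊆ (B(H)ˢᵃ)*` a subspace of functionals.  Present the quotient `V = W/(W ∩ W̃^⊥)`
by a surjective map `L` with kernel `W ∩ W̃^⊥`, and the quotient
`Vd = (W̃ + W^⊥)/W^⊥` by a surjective map `Lt` with kernel `W^⊥`.  Then `Vd` and the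
dual space `V*` are naturally isomorphic (via the evaluation pairing).  If moreover
`W = span(W⁺)` and `(W ∩ W̃^⊥) ∩ S⁺ = {0}`, then (1) the cone `C = L(W⁺)` is a
proper SDR cone, and (2) the dual cone of `C` equals the image
`(W̃ + W^⊥)⁺/W^⊥` of the positive semidefinite functionals of `W̃ + W^⊥`. -/
theorem quotient_dual_iso_and_SDR_cone
    {n : ℕ} (W : Submodule ℝ (Mat n))
    (hherm : ∀ A ∈ W, A.IsHermitian) (hI : (1 : Mat n) ∈ W)
    (Wt : Submodule ℝ (Module.Dual ℝ (Mat n)))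
    (V Vd : Type) [AddCommGroup V] [Module ℝ V] [AddCommGroup Vd] [Module ℝ Vd]
    -- L : W → V is the quotient map by K = W ∩ W̃^⊥
    (L : ↥W →ₗ[ℝ] V) (hL : Function.Surjective L)
    (hLker : ∀ x : ↥W, L x = 0 ↔ (x : Mat n) ∈ Wt.dualCoannihilator)
    -- Lt : W̃ + W^⊥ → Vd is the quotient map by W^⊥
    (Lt : ↥(Wt ⊔ W.dualAnnihilator) →ₗ[ℝ] Vd) (hLt : Function.Surjective Lt)
    (hLtker : ∀ σ : ↥(Wt ⊔ W.dualAnnihilator),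
      Lt σ = 0 ↔ (σ : Module.Dual ℝ (Mat n)) ∈ W.dualAnnihilator) :
    -- the two spaces are naturally isomorphic, via the evaluation pairing
    (∃ e : Vd ≃ₗ[ℝ] Module.Dual ℝ V,
      ∀ (σ : ↥(Wt ⊔ W.dualAnnihilator)) (x : ↥W),
        e (Lt σ) (L x) = (σ : Module.Dual ℝ (Mat n)) (x : Mat n)) ∧
    -- under the additional hypotheses on positivity:
    ((Submodule.span ℝ {x : ↥W | ((x : Mat n)).PosSemidef} = ⊤) →
     (∀ x : Mat n, x ∈ W → x ∈ Wt.dualCoannihilator → x.PosSemidef → x = 0) →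
      -- (1) C = L(W⁺) is a proper SDR cone
      (IsSDRCone {v : V | ∃ x : ↥W, ((x : Mat n)).PosSemidef ∧ v = L x} ∧
        (∀ v : V, (∃ x : ↥W, ((x : Mat n)).PosSemidef ∧ v = L x) →
          (∃ x : ↥W, ((x : Mat n)).PosSemidef ∧ -v = L x) → v = 0) ∧
        Submodule.span ℝ {v : V | ∃ x : ↥W, ((x : Mat n)).PosSemidef ∧ v = L x} = ⊤) ∧
      -- (2) dual cone of C = image of the positive part of W̃ + W^⊥
      (∀ f : Module.Dual ℝ V,
        (∀ x : ↥W, ((x : Mat n)).PosSemidef → 0 ≤ f (L x)) ↔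
          ∃ σ : ↥(Wt ⊔ W.dualAnnihilator),
            (∀ P : Mat n, P.PosSemidef → 0 ≤ (σ : Module.Dual ℝ (Mat n)) P) ∧
            ∀ x : ↥W, f (L x) = (σ : Module.Dual ℝ (Mat n)) (x : Mat n))) := by
  classical
  -- the annihilator identity
  have hann : (W ⊓ Wt.dualCoannihilator).dualAnnihilator = Wt ⊔ W.dualAnnihilator := by
    rw [Subspace.dualAnnihilator_inf_eq, Subspace.dualCoannihilator_dualAnnihilator_eq, sup_comm]
  -- elements of Wt ⊔ W^⊥ kill the kernel of L
  have hkill : ∀ σ : ↥(Wt ⊔ W.dualAnnihilator), ∀ x : ↥W, L x = 0 →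
      (σ : Module.Dual ℝ (Mat n)) (x : Mat n) = 0 := by
    intro σ x hx
    have hmem : (x : Mat n) ∈ W ⊓ Wt.dualCoannihilator := ⟨x.2, (hLker x).mp hx⟩
    have hσ : (σ : Module.Dual ℝ (Mat n)) ∈ (W ⊓ Wt.dualCoannihilator).dualAnnihilator := by
      rw [hann]; exact σ.2
    exact (Submodule.mem_dualAnnihilator _).mp hσ _ hmem
  -- the pairing map Ψ : (Wt ⊔ W^⊥) → V*
  have hΨex : ∃ Ψ : ↥(Wt ⊔ W.dualAnnihilator) →ₗ[ℝ] Module.Dual ℝ V,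
      ∀ (σ : ↥(Wt ⊔ W.dualAnnihilator)) (x : ↥W),
        Ψ σ (L x) = (σ : Module.Dual ℝ (Mat n)) (x : Mat n) := by
    have hinjpre : Function.Injective
        (LinearMap.lcomp ℝ ℝ L : Module.Dual ℝ V →ₗ[ℝ] (↥W →ₗ[ℝ] ℝ)) := by
      intro a b hab
      ext v
      obtain ⟨x, rfl⟩ := hL v
      exact LinearMap.congr_fun hab x
    have hland : ∀ σ : ↥(Wt ⊔ W.dualAnnihilator),
        ((LinearMap.lcomp ℝ ℝ W.subtype).comp (Wt ⊔ W.dualAnnihilator).subtype) σ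
          ∈ LinearMap.range (LinearMap.lcomp ℝ ℝ L :
            Module.Dual ℝ V →ₗ[ℝ] (↥W →ₗ[ℝ] ℝ)) := by
      intro σ
      obtain ⟨G, hG⟩ := descend_surj L hL ((σ : Module.Dual ℝ (Mat n)).comp W.subtype)
        (fun x hx => hkill σ x hx)
      exact ⟨G, by ext x; simpa using hG x⟩
    have key : ∀ (φ : ↥(LinearMap.range (LinearMap.lcomp ℝ ℝ L :
        Module.Dual ℝ V →ₗ[ℝ] (↥W →ₗ[ℝ] ℝ)))),
        (LinearMap.lcomp ℝ ℝ L) ((LinearEquiv.ofInjective _ hinjpre).symm φ)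
          = (φ : ↥W →ₗ[ℝ] ℝ) := by
      intro φ
      have h2 := LinearEquiv.apply_symm_apply (LinearEquiv.ofInjective _ hinjpre) φ
      calc (LinearMap.lcomp ℝ ℝ L) ((LinearEquiv.ofInjective _ hinjpre).symm φ)
          = (((LinearEquiv.ofInjective _ hinjpre)
              ((LinearEquiv.ofInjective _ hinjpre).symm φ)) : ↥W →ₗ[ℝ] ℝ) :=
            (LinearEquiv.ofInjective_apply _ _).symm
        _ = (φ : ↥W →ₗ[ℝ] ℝ) := by rw [h2]
    refine ⟨(LinearEquiv.ofInjective _ hinjpre).symm.toLinearMap.comp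
      (LinearMap.codRestrict _
        ((LinearMap.lcomp ℝ ℝ W.subtype).comp (Wt ⊔ W.dualAnnihilator).subtype) hland),
      fun σ x => ?_⟩
    have h1 := key ⟨((LinearMap.lcomp ℝ ℝ W.subtype).comp
      (Wt ⊔ W.dualAnnihilator).subtype) σ, hland σ⟩
    have h3 := LinearMap.congr_fun h1 x
    simp only [LinearMap.lcomp_apply, LinearMap.comp_apply] at h3 ⊢
    rw [LinearEquiv.coe_coe]
    exact h3
  obtain ⟨Ψ, hΨ⟩ := hΨex
  -- descend Ψ through Lt
  have hΨker : ∀ σ, Lt σ = 0 → Ψ σ = 0 := by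
    intro σ hσ
    have hσW : (σ : Module.Dual ℝ (Mat n)) ∈ W.dualAnnihilator := (hLtker σ).mp hσ
    ext v
    obtain ⟨x, rfl⟩ := hL v
    rw [hΨ σ x]
    simp only [LinearMap.zero_apply]
    exact (Submodule.mem_dualAnnihilator _).mp hσW _ x.2
  obtain ⟨e₀, he₀⟩ := descend_surj Lt hLt Ψ (fun σ hσ => hΨker σ hσ)
  have hinj : Function.Injective e₀ := by
    rw [← LinearMap.ker_eq_bot, LinearMap.ker_eq_bot']
    intro w hw
    obtain ⟨σ, rfl⟩ := hLt w
    rw [he₀] at hw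
    apply (hLtker σ).mpr
    rw [Submodule.mem_dualAnnihilator]
    intro m hm
    have h4 := congrArg (fun F : Module.Dual ℝ V => F (L ⟨m, hm⟩)) hw
    simp only [LinearMap.zero_apply] at h4
    rw [hΨ σ ⟨m, hm⟩] at h4
    exact h4
  have hsurj : Function.Surjective e₀ := by
    intro f
    obtain ⟨g, hg⟩ := LinearMap.exists_extend (f.comp L)
    have hgW : ∀ x : ↥W, g (x : Mat n) = f (L x) := fun x => LinearMap.congr_fun hg x
    have hgmem : g ∈ Wt ⊔ W.dualAnnihilator := by
      rw [← hann, Submodule.mem_dualAnnihilator]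
      rintro m ⟨hmW, hmWt⟩
      have h0 : L ⟨m, hmW⟩ = 0 := (hLker ⟨m, hmW⟩).mpr hmWt
      have h1 := hgW ⟨m, hmW⟩
      rw [h0, map_zero] at h1
      exact h1
    refine ⟨Lt ⟨g, hgmem⟩, ?_⟩
    rw [he₀]
    ext v
    obtain ⟨x, rfl⟩ := hL v
    rw [hΨ ⟨g, hgmem⟩ x]
    exact hgW x
  refine ⟨⟨LinearEquiv.ofBijective e₀ ⟨hinj, hsurj⟩, fun σ x => ?_⟩, ?_⟩
  · show e₀ (Lt σ) (L x) = _
    rw [he₀, hΨ σ x]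
  intro hspan hKpos
  constructor
  · refine ⟨⟨n, W, hherm, L, rfl⟩, ?_, ?_⟩
    · rintro v ⟨x, hx, rfl⟩ ⟨y, hy, hyv⟩
      have hsum : L (x + y) = 0 := by
        rw [map_add, ← hyv, add_neg_cancel]
      have hxy0 : (x : Mat n) + (y : Mat n) = 0 := by
        have hmem := (hLker (x + y)).mp hsum
        exact hKpos ((x : Mat n) + (y : Mat n)) (W.add_mem x.2 y.2) hmem (hx.add hy)
      have hyx : -(x : Mat n) = (y : Mat n) := neg_eq_of_add_eq_zero_right hxy0
      have hx0 : (x : Mat n) = 0 := psd_neg_eq_zero hx (hyx ▸ hy)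
      have hxz : x = (0 : ↥W) := Subtype.ext hx0
      rw [hxz, map_zero]
    · have himg : {v : V | ∃ x : ↥W, ((x : Mat n)).PosSemidef ∧ v = L x}
          = L '' {x : ↥W | ((x : Mat n)).PosSemidef} := by
        ext v
        constructor
        · rintro ⟨x, hx, rfl⟩; exact ⟨x, hx, rfl⟩
        · rintro ⟨x, hx, rfl⟩; exact ⟨x, hx, rfl⟩
      rw [himg, Submodule.span_image, hspan, Submodule.map_top, LinearMap.range_eq_top.mpr hL]
  · intro f
    constructor
    · -- forward direction: M. Riesz extension
      intro hf
      obtain ⟨g, hgpos, hgW⟩ := exists_pos_ext W hherm hI (f.comp L)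
        (fun x hx => hf x hx)
      have hgmem : g ∈ Wt ⊔ W.dualAnnihilator := by
        rw [← hann, Submodule.mem_dualAnnihilator]
        rintro m ⟨hmW, hmWt⟩
        have h0 : L ⟨m, hmW⟩ = 0 := (hLker ⟨m, hmW⟩).mpr hmWt
        have h1 := hgW ⟨m, hmW⟩
        rw [LinearMap.comp_apply, h0, map_zero] at h1
        exact h1
      refine ⟨⟨g, hgmem⟩, hgpos, fun x => ?_⟩
      have h1 := hgW x
      rw [LinearMap.comp_apply] at h1
      exact h1.symm
    · rintro ⟨σ, h1, h2⟩ x hx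
      rw [h2 x]
      exact h1 _ hx
end

section
/- Let W ⊂ M₄(ℂ) be the space of tridiagonal 4×4 matrices (A with A_{jk} = 0 whenever |j − k| > 1) and let K_ℂ ⊂ W be the traceless diagonal matrices. There is no positive, Hermitian-preserving linear map F : W → W (i.e., F(X*) = F(X)* and F maps every positive semidefinite element of W to a positive semidefinite element of W) satisfying: F(|1⟩⟨2|) − |1⟩⟨2| ∈ K_ℂ, F(|2⟩⟨3|) − |3⟩⟨4| ∈ K_ℂ, F(|3⟩⟨4|) − |2⟩⟨3| ∈ K_ℂ, and F(|j⟩⟨j|) is a nonnegative diagonal matrix of unit trace for each j = 1, 2, 3, 4. -/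
open Matrix
open scoped ComplexOrder

/-- The subspace of tridiagonal `4 × 4` complex matrices:
`A j k = 0` whenever `|j - k| > 1`. -/
noncomputable def tridiag : Submodule ℂ (Matrix (Fin 4) (Fin 4) ℂ) where
  carrier := {A | ∀ j k : Fin 4, 1 < |(j : ℤ) - (k : ℤ)| → A j k = 0}
  add_mem' := by
    intro A B hA hB j k h
    simp [Matrix.add_apply, hA j k h, hB j k h]
  zero_mem' := by intro j k _; simp
  smul_mem' := by
    intro c A hA j k h
    simp [Matrix.smul_apply, hA j k h]

/-- The subspace of traceless diagonal `4 × 4` complex matrices. -/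
noncomputable def tracelessDiag : Submodule ℂ (Matrix (Fin 4) (Fin 4) ℂ) where
  carrier := {A | (∀ j k : Fin 4, j ≠ k → A j k = 0) ∧ A.trace = 0}
  add_mem' := by
    rintro A B ⟨hA, hA'⟩ ⟨hB, hB'⟩
    refine ⟨fun j k h => by simp [Matrix.add_apply, hA j k h, hB j k h], ?_⟩
    simp [Matrix.trace_add, hA', hB']
  zero_mem' := ⟨fun j k _ => rfl, by simp⟩
  smul_mem' := by
    rintro c A ⟨hA, hA'⟩
    refine ⟨fun j k h => by simp [Matrix.smul_apply, hA j k h], ?_⟩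
    simp [Matrix.trace_smul, hA']

noncomputable def SB (i j : Fin 4) : Matrix (Fin 4) (Fin 4) ℂ :=
  Matrix.single i j (1 : ℂ)

lemma SB_def (i j : Fin 4) : Matrix.single i j (1 : ℂ) = SB i j := rfl

lemma std_conj01 : (SB 0 1)ᴴ = SB 1 0 := by
  ext i j
  rw [Matrix.conjTranspose_apply]
  fin_cases i <;> fin_cases j <;> simp [SB, Matrix.single]

lemma std_conj12 : (SB 1 2)ᴴ = SB 2 1 := by
  ext i j
  rw [Matrix.conjTranspose_apply]
  fin_cases i <;> fin_cases j <;> simp [SB, Matrix.single]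

lemma outer_eq1p : SB 0 0 + SB 1 1 + SB 0 1 + SB 1 0
    = Matrix.of fun i j => (![1,1,0,0] : Fin 4 → ℂ) i * star (![1,1,0,0] j) := by
  ext i j
  fin_cases i <;> fin_cases j <;> simp [SB, Matrix.single]

lemma outer_eq1m : SB 0 0 + SB 1 1 - SB 0 1 - SB 1 0
    = Matrix.of fun i j => (![1,-1,0,0] : Fin 4 → ℂ) i * star (![1,-1,0,0] j) := by
  ext i j
  fin_cases i <;> fin_cases j <;> simp [SB, Matrix.single]

lemma outer_eq2p : SB 1 1 + SB 2 2 + SB 1 2 + SB 2 1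
    = Matrix.of fun i j => (![0,1,1,0] : Fin 4 → ℂ) i * star (![0,1,1,0] j) := by
  ext i j
  fin_cases i <;> fin_cases j <;> simp [SB, Matrix.single]

lemma outer_eq2m : SB 1 1 + SB 2 2 - SB 1 2 - SB 2 1
    = Matrix.of fun i j => (![0,1,-1,0] : Fin 4 → ℂ) i * star (![0,1,-1,0] j) := by
  ext i j
  fin_cases i <;> fin_cases j <;> simp [SB, Matrix.single]

lemma trace_SB (i j : Fin 4) : (SB i j).trace = if i = j then 1 else 0 := by
  fin_cases i <;> fin_cases j <;>
    simp [SB, Matrix.trace, Matrix.diag, Fin.sum_univ_four, Matrix.single] <;> decide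

/-- outer product is PSD -/
lemma outer_psd (v : Fin 4 → ℂ) : (Matrix.of fun i j => v i * star (v j)).PosSemidef := by
  rw [Matrix.posSemidef_iff_dotProduct_mulVec]
  constructor
  · ext i j
    simp [Matrix.conjTranspose_apply, mul_comm]
  · intro x
    have e : star x ⬝ᵥ (Matrix.of fun i j => v i * star (v j)).mulVec x
        = star (star v ⬝ᵥ x) * (star v ⬝ᵥ x) := by
      simp [dotProduct, Matrix.mulVec, Fin.sum_univ_four]
      ring
    rw [e]
    exact star_mul_self_nonneg _

lemma SB_mem_tridiag (i j : Fin 4) (h : |(i:ℤ) - (j:ℤ)| ≤ 1) : SB i j ∈ tridiag := by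
  intro k l hkl
  rcases eq_or_ne i k with rfl | hik
  · rcases eq_or_ne j l with rfl | hjl
    · exact absurd hkl (not_lt.mpr h)
    · simp [SB, Matrix.single, hjl]
  · simp [SB, Matrix.single, hik]

lemma key01 (Y : Matrix (Fin 4) (Fin 4) ℂ) (hY : Y.PosSemidef) (htr : Y.trace = 2)
    (h01 : Y 0 1 = 1) (h10 : Y 1 0 = 1) : (Y 2 2).re = 0 ∧ (Y 3 3).re = 0 := by
  have hform := hY.dotProduct_mulVec_nonneg ![1, -1, 0, 0]
  have h22 := hY.dotProduct_mulVec_nonneg ![0, 0, 1, 0]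
  have h33 := hY.dotProduct_mulVec_nonneg ![0, 0, 0, 1]
  have e1 : star (![1, -1, 0, 0] : Fin 4 → ℂ) ⬝ᵥ Y.mulVec ![1, -1, 0, 0]
      = Y 0 0 + Y 1 1 - Y 0 1 - Y 1 0 := by
    simp [dotProduct, Matrix.mulVec, Fin.sum_univ_four]
    ring
  have e2 : star (![0, 0, 1, 0] : Fin 4 → ℂ) ⬝ᵥ Y.mulVec ![0, 0, 1, 0] = Y 2 2 := by
    simp [dotProduct, Matrix.mulVec, Fin.sum_univ_four]
  have e3 : star (![0, 0, 0, 1] : Fin 4 → ℂ) ⬝ᵥ Y.mulVec ![0, 0, 0, 1] = Y 3 3 := by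
    simp [dotProduct, Matrix.mulVec, Fin.sum_univ_four]
  rw [e1, h01, h10] at hform
  rw [e2] at h22
  rw [e3] at h33
  rw [Complex.le_def] at hform h22 h33
  have f1 : (2:ℝ) ≤ (Y 0 0).re + (Y 1 1).re := by have := hform.1; simp at this; linarith
  have f2 : (0:ℝ) ≤ (Y 2 2).re := by simpa using h22.1
  have f3 : (0:ℝ) ≤ (Y 3 3).re := by simpa using h33.1
  have htr' : (Y 0 0).re + (Y 1 1).re + (Y 2 2).re + (Y 3 3).re = 2 := by
    have : (Y.trace).re = 2 := by rw [htr]; simp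
    simpa [Matrix.trace, Matrix.diag, Fin.sum_univ_four] using this
  constructor <;> linarith

lemma key01m (Y : Matrix (Fin 4) (Fin 4) ℂ) (hY : Y.PosSemidef) (htr : Y.trace = 2)
    (h01 : Y 0 1 = -1) (h10 : Y 1 0 = -1) : (Y 2 2).re = 0 ∧ (Y 3 3).re = 0 := by
  have hform := hY.dotProduct_mulVec_nonneg ![1, 1, 0, 0]
  have h22 := hY.dotProduct_mulVec_nonneg ![0, 0, 1, 0]
  have h33 := hY.dotProduct_mulVec_nonneg ![0, 0, 0, 1]
  have e1 : star (![1, 1, 0, 0] : Fin 4 → ℂ) ⬝ᵥ Y.mulVec ![1, 1, 0, 0]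
      = Y 0 0 + Y 1 1 + Y 0 1 + Y 1 0 := by
    simp [dotProduct, Matrix.mulVec, Fin.sum_univ_four]
    ring
  have e2 : star (![0, 0, 1, 0] : Fin 4 → ℂ) ⬝ᵥ Y.mulVec ![0, 0, 1, 0] = Y 2 2 := by
    simp [dotProduct, Matrix.mulVec, Fin.sum_univ_four]
  have e3 : star (![0, 0, 0, 1] : Fin 4 → ℂ) ⬝ᵥ Y.mulVec ![0, 0, 0, 1] = Y 3 3 := by
    simp [dotProduct, Matrix.mulVec, Fin.sum_univ_four]
  rw [e1, h01, h10] at hform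
  rw [e2] at h22
  rw [e3] at h33
  rw [Complex.le_def] at hform h22 h33
  have f1 : (2:ℝ) ≤ (Y 0 0).re + (Y 1 1).re := by have := hform.1; simp at this; linarith
  have f2 : (0:ℝ) ≤ (Y 2 2).re := by simpa using h22.1
  have f3 : (0:ℝ) ≤ (Y 3 3).re := by simpa using h33.1
  have htr' : (Y 0 0).re + (Y 1 1).re + (Y 2 2).re + (Y 3 3).re = 2 := by
    have : (Y.trace).re = 2 := by rw [htr]; simp
    simpa [Matrix.trace, Matrix.diag, Fin.sum_univ_four] using this
  constructor <;> linarith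

lemma key23 (Y : Matrix (Fin 4) (Fin 4) ℂ) (hY : Y.PosSemidef) (htr : Y.trace = 2)
    (h23 : Y 2 3 = 1) (h32 : Y 3 2 = 1) : (Y 0 0).re = 0 ∧ (Y 1 1).re = 0 := by
  have hform := hY.dotProduct_mulVec_nonneg ![0, 0, 1, -1]
  have h00 := hY.dotProduct_mulVec_nonneg ![1, 0, 0, 0]
  have h11 := hY.dotProduct_mulVec_nonneg ![0, 1, 0, 0]
  have e1 : star (![0, 0, 1, -1] : Fin 4 → ℂ) ⬝ᵥ Y.mulVec ![0, 0, 1, -1]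
      = Y 2 2 + Y 3 3 - Y 2 3 - Y 3 2 := by
    simp [dotProduct, Matrix.mulVec, Fin.sum_univ_four]
    ring
  have e2 : star (![1, 0, 0, 0] : Fin 4 → ℂ) ⬝ᵥ Y.mulVec ![1, 0, 0, 0] = Y 0 0 := by
    simp [dotProduct, Matrix.mulVec, Fin.sum_univ_four]
  have e3 : star (![0, 1, 0, 0] : Fin 4 → ℂ) ⬝ᵥ Y.mulVec ![0, 1, 0, 0] = Y 1 1 := by
    simp [dotProduct, Matrix.mulVec, Fin.sum_univ_four]
  rw [e1, h23, h32] at hform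
  rw [e2] at h00
  rw [e3] at h11
  rw [Complex.le_def] at hform h00 h11
  have f1 : (2:ℝ) ≤ (Y 2 2).re + (Y 3 3).re := by have := hform.1; simp at this; linarith
  have f2 : (0:ℝ) ≤ (Y 0 0).re := by simpa using h00.1
  have f3 : (0:ℝ) ≤ (Y 1 1).re := by simpa using h11.1
  have htr' : (Y 0 0).re + (Y 1 1).re + (Y 2 2).re + (Y 3 3).re = 2 := by
    have : (Y.trace).re = 2 := by rw [htr]; simp
    simpa [Matrix.trace, Matrix.diag, Fin.sum_univ_four] using this
  constructor <;> linarith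

lemma key23m (Y : Matrix (Fin 4) (Fin 4) ℂ) (hY : Y.PosSemidef) (htr : Y.trace = 2)
    (h23 : Y 2 3 = -1) (h32 : Y 3 2 = -1) : (Y 0 0).re = 0 ∧ (Y 1 1).re = 0 := by
  have hform := hY.dotProduct_mulVec_nonneg ![0, 0, 1, 1]
  have h00 := hY.dotProduct_mulVec_nonneg ![1, 0, 0, 0]
  have h11 := hY.dotProduct_mulVec_nonneg ![0, 1, 0, 0]
  have e1 : star (![0, 0, 1, 1] : Fin 4 → ℂ) ⬝ᵥ Y.mulVec ![0, 0, 1, 1]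
      = Y 2 2 + Y 3 3 + Y 2 3 + Y 3 2 := by
    simp [dotProduct, Matrix.mulVec, Fin.sum_univ_four]
    ring
  have e2 : star (![1, 0, 0, 0] : Fin 4 → ℂ) ⬝ᵥ Y.mulVec ![1, 0, 0, 0] = Y 0 0 := by
    simp [dotProduct, Matrix.mulVec, Fin.sum_univ_four]
  have e3 : star (![0, 1, 0, 0] : Fin 4 → ℂ) ⬝ᵥ Y.mulVec ![0, 1, 0, 0] = Y 1 1 := by
    simp [dotProduct, Matrix.mulVec, Fin.sum_univ_four]
  rw [e1, h23, h32] at hform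
  rw [e2] at h00
  rw [e3] at h11
  rw [Complex.le_def] at hform h00 h11
  have f1 : (2:ℝ) ≤ (Y 2 2).re + (Y 3 3).re := by have := hform.1; simp at this; linarith
  have f2 : (0:ℝ) ≤ (Y 0 0).re := by simpa using h00.1
  have f3 : (0:ℝ) ≤ (Y 1 1).re := by simpa using h11.1
  have htr' : (Y 0 0).re + (Y 1 1).re + (Y 2 2).re + (Y 3 3).re = 2 := by
    have : (Y.trace).re = 2 := by rw [htr]; simp
    simpa [Matrix.trace, Matrix.diag, Fin.sum_univ_four] using this
  constructor <;> linarith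

/-- there is no positive, Hermitian-preserving linear map
`F : W → W` on the tridiagonal `4 × 4` matrices (preserving the traceless diagonal
subspace in the indicated way) that realizes the permutation `(1)(23)` of the matrix
units:  `F(|1⟩⟨2|) ≡ |1⟩⟨2|`, `F(|2⟩⟨3|) ≡ |3⟩⟨4|`, `F(|3⟩⟨4|) ≡ |2⟩⟨3|` modulo
traceless diagonals, with each `F(|j⟩⟨j|)` a nonnegative diagonal matrix of unit
trace. -/
theorem no_positive_lifting_of_permutation :
    ¬ ∃ F : Matrix (Fin 4) (Fin 4) ℂ →ₗ[ℂ] Matrix (Fin 4) (Fin 4) ℂ,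
      -- F maps W into W
      (∀ A ∈ tridiag, F A ∈ tridiag) ∧
      -- F is Hermitian-preserving on W
      (∀ A ∈ tridiag, F Aᴴ = (F A)ᴴ) ∧
      -- F is positive: it maps positive semidefinite elements of W to
      -- positive semidefinite elements of W
      (∀ A ∈ tridiag, A.PosSemidef → (F A).PosSemidef) ∧
      -- the action on the off-diagonal matrix units, modulo traceless diagonals
      F (Matrix.single 0 1 (1 : ℂ)) - Matrix.single 0 1 (1 : ℂ)
        ∈ tracelessDiag ∧
      F (Matrix.single 1 2 (1 : ℂ)) - Matrix.single 2 3 (1 : ℂ)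
        ∈ tracelessDiag ∧
      F (Matrix.single 2 3 (1 : ℂ)) - Matrix.single 1 2 (1 : ℂ)
        ∈ tracelessDiag ∧
      -- each F(|j⟩⟨j|) is a nonnegative diagonal matrix of unit trace
      (∀ j : Fin 4,
        (∀ k l : Fin 4, k ≠ l → F (Matrix.single j j (1 : ℂ)) k l = 0) ∧
        (∀ k : Fin 4, (F (Matrix.single j j (1 : ℂ)) k k).im = 0 ∧
          0 ≤ (F (Matrix.single j j (1 : ℂ)) k k).re) ∧
        (F (Matrix.single j j (1 : ℂ))).trace = 1) := by
  rintro ⟨F, hW, hH, hPos, hB, hC, -, hDiag⟩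
  simp only [SB_def] at hB hC hDiag
  -- basic memberships
  have m00 : SB 0 0 ∈ tridiag := SB_mem_tridiag 0 0 (by decide)
  have m11 : SB 1 1 ∈ tridiag := SB_mem_tridiag 1 1 (by decide)
  have m22 : SB 2 2 ∈ tridiag := SB_mem_tridiag 2 2 (by decide)
  have m01 : SB 0 1 ∈ tridiag := SB_mem_tridiag 0 1 (by decide)
  have m10 : SB 1 0 ∈ tridiag := SB_mem_tridiag 1 0 (by decide)
  have m12 : SB 1 2 ∈ tridiag := SB_mem_tridiag 1 2 (by decide)
  have m21 : SB 2 1 ∈ tridiag := SB_mem_tridiag 2 1 (by decide)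
  -- hermitian images of the transposed units
  have hB10 : F (SB 1 0) = (F (SB 0 1))ᴴ := by rw [← std_conj01]; exact hH _ m01
  have hC21 : F (SB 2 1) = (F (SB 1 2))ᴴ := by rw [← std_conj12]; exact hH _ m12
  -- entry facts about B := F (SB 0 1) and C := F (SB 1 2)
  have hB' : (∀ j k : Fin 4, j ≠ k → (F (SB 0 1) - SB 0 1) j k = 0) ∧
      (F (SB 0 1) - SB 0 1).trace = 0 := hB
  have hC' : (∀ j k : Fin 4, j ≠ k → (F (SB 1 2) - SB 2 3) j k = 0) ∧
      (F (SB 1 2) - SB 2 3).trace = 0 := hC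
  obtain ⟨hBoff, hBtr⟩ := hB'
  obtain ⟨hCoff, hCtr⟩ := hC'
  have b01 : F (SB 0 1) 0 1 = 1 := by
    have := hBoff 0 1 (by decide)
    simpa [Matrix.sub_apply, SB, Matrix.single, sub_eq_zero] using this
  have b10 : F (SB 0 1) 1 0 = 0 := by
    have := hBoff 1 0 (by decide)
    simpa [Matrix.sub_apply, SB, Matrix.single, sub_eq_zero] using this
  have c23 : F (SB 1 2) 2 3 = 1 := by
    have := hCoff 2 3 (by decide)
    simpa [Matrix.sub_apply, SB, Matrix.single, sub_eq_zero] using this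
  have c32 : F (SB 1 2) 3 2 = 0 := by
    have := hCoff 3 2 (by decide)
    simpa [Matrix.sub_apply, SB, Matrix.single, sub_eq_zero] using this
  have trB : (F (SB 0 1)).trace = 0 := by
    rw [Matrix.trace_sub, trace_SB] at hBtr
    simpa [sub_eq_zero] using hBtr
  have trC : (F (SB 1 2)).trace = 0 := by
    rw [Matrix.trace_sub, trace_SB] at hCtr
    simpa [sub_eq_zero] using hCtr
  -- diagonal images
  have off0 := (hDiag 0).1
  have off1 := (hDiag 1).1
  have off2 := (hDiag 2).1
  have tr0 := (hDiag 0).2.2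
  have tr1 := (hDiag 1).2.2
  have tr2 := (hDiag 2).2.2
  -- ===== round 1: the matrices  diag(1,1,0,0) ± (E01 + E10) =====
  have eY1p : F (SB 0 0 + SB 1 1 + SB 0 1 + SB 1 0)
      = F (SB 0 0) + F (SB 1 1) + F (SB 0 1) + (F (SB 0 1))ᴴ := by
    rw [map_add, map_add, map_add, hB10]
  have eY1m : F (SB 0 0 + SB 1 1 - SB 0 1 - SB 1 0)
      = F (SB 0 0) + F (SB 1 1) - F (SB 0 1) - (F (SB 0 1))ᴴ := by
    rw [map_sub, map_sub, map_add, hB10]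
  have psd1p : (F (SB 0 0 + SB 1 1 + SB 0 1 + SB 1 0)).PosSemidef := by
    refine hPos _ (add_mem (add_mem (add_mem m00 m11) m01) m10) ?_
    rw [outer_eq1p]; exact outer_psd _
  have psd1m : (F (SB 0 0 + SB 1 1 - SB 0 1 - SB 1 0)).PosSemidef := by
    refine hPos _ (sub_mem (sub_mem (add_mem m00 m11) m01) m10) ?_
    rw [outer_eq1m]; exact outer_psd _
  have trY1p : (F (SB 0 0 + SB 1 1 + SB 0 1 + SB 1 0)).trace = 2 := by
    rw [eY1p, Matrix.trace_add, Matrix.trace_add, Matrix.trace_add,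
      Matrix.trace_conjTranspose, trB, tr0, tr1]
    norm_num
  have trY1m : (F (SB 0 0 + SB 1 1 - SB 0 1 - SB 1 0)).trace = 2 := by
    rw [eY1m, Matrix.trace_sub, Matrix.trace_sub, Matrix.trace_add,
      Matrix.trace_conjTranspose, trB, tr0, tr1]
    norm_num
  have h01p : (F (SB 0 0 + SB 1 1 + SB 0 1 + SB 1 0)) 0 1 = 1 := by
    rw [eY1p]
    simp [Matrix.add_apply, Matrix.conjTranspose_apply, off0 0 1 (by decide),
      off1 0 1 (by decide), b01, b10]
  have h10p : (F (SB 0 0 + SB 1 1 + SB 0 1 + SB 1 0)) 1 0 = 1 := by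
    rw [eY1p]
    simp [Matrix.add_apply, Matrix.conjTranspose_apply, off0 1 0 (by decide),
      off1 1 0 (by decide), b01, b10]
  have h01m : (F (SB 0 0 + SB 1 1 - SB 0 1 - SB 1 0)) 0 1 = -1 := by
    rw [eY1m]
    simp [Matrix.sub_apply, Matrix.add_apply, Matrix.conjTranspose_apply,
      off0 0 1 (by decide), off1 0 1 (by decide), b01, b10]
  have h10m : (F (SB 0 0 + SB 1 1 - SB 0 1 - SB 1 0)) 1 0 = -1 := by
    rw [eY1m]
    simp [Matrix.sub_apply, Matrix.add_apply, Matrix.conjTranspose_apply,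
      off0 1 0 (by decide), off1 1 0 (by decide), b01, b10]
  have k1p := key01 _ psd1p trY1p h01p h10p
  have k1m := key01m _ psd1m trY1m h01m h10m
  -- extract diagonal relations at entries (2,2) and (3,3)
  have d22p : (F (SB 0 0) 2 2).re + (F (SB 1 1) 2 2).re + 2 * (F (SB 0 1) 2 2).re = 0 := by
    have := k1p.1
    rw [eY1p] at this
    simp [Matrix.add_apply, Matrix.conjTranspose_apply, Complex.add_re,
      Complex.star_def, Complex.conj_re] at this
    linarith
  have d22m : (F (SB 0 0) 2 2).re + (F (SB 1 1) 2 2).re - 2 * (F (SB 0 1) 2 2).re = 0 := by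
    have := k1m.1
    rw [eY1m] at this
    simp [Matrix.sub_apply, Matrix.add_apply, Matrix.conjTranspose_apply, Complex.add_re,
      Complex.sub_re, Complex.star_def, Complex.conj_re] at this
    linarith
  have d33p : (F (SB 0 0) 3 3).re + (F (SB 1 1) 3 3).re + 2 * (F (SB 0 1) 3 3).re = 0 := by
    have := k1p.2
    rw [eY1p] at this
    simp [Matrix.add_apply, Matrix.conjTranspose_apply, Complex.add_re,
      Complex.star_def, Complex.conj_re] at this
    linarith
  have d33m : (F (SB 0 0) 3 3).re + (F (SB 1 1) 3 3).re - 2 * (F (SB 0 1) 3 3).re = 0 := by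
    have := k1m.2
    rw [eY1m] at this
    simp [Matrix.sub_apply, Matrix.add_apply, Matrix.conjTranspose_apply, Complex.add_re,
      Complex.sub_re, Complex.star_def, Complex.conj_re] at this
    linarith
  have p1_22 : (F (SB 1 1) 2 2).re = 0 := by
    have h1 := ((hDiag 0).2.1 2).2
    have h2 := ((hDiag 1).2.1 2).2
    linarith
  have p1_33 : (F (SB 1 1) 3 3).re = 0 := by
    have h1 := ((hDiag 0).2.1 3).2
    have h2 := ((hDiag 1).2.1 3).2
    linarith
  -- ===== round 2: the matrices  diag(0,1,1,0) ± (E12 + E21) =====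
  have eY2p : F (SB 1 1 + SB 2 2 + SB 1 2 + SB 2 1)
      = F (SB 1 1) + F (SB 2 2) + F (SB 1 2) + (F (SB 1 2))ᴴ := by
    rw [map_add, map_add, map_add, hC21]
  have eY2m : F (SB 1 1 + SB 2 2 - SB 1 2 - SB 2 1)
      = F (SB 1 1) + F (SB 2 2) - F (SB 1 2) - (F (SB 1 2))ᴴ := by
    rw [map_sub, map_sub, map_add, hC21]
  have psd2p : (F (SB 1 1 + SB 2 2 + SB 1 2 + SB 2 1)).PosSemidef := by
    refine hPos _ (add_mem (add_mem (add_mem m11 m22) m12) m21) ?_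
    rw [outer_eq2p]; exact outer_psd _
  have psd2m : (F (SB 1 1 + SB 2 2 - SB 1 2 - SB 2 1)).PosSemidef := by
    refine hPos _ (sub_mem (sub_mem (add_mem m11 m22) m12) m21) ?_
    rw [outer_eq2m]; exact outer_psd _
  have trY2p : (F (SB 1 1 + SB 2 2 + SB 1 2 + SB 2 1)).trace = 2 := by
    rw [eY2p, Matrix.trace_add, Matrix.trace_add, Matrix.trace_add,
      Matrix.trace_conjTranspose, trC, tr1, tr2]
    norm_num
  have trY2m : (F (SB 1 1 + SB 2 2 - SB 1 2 - SB 2 1)).trace = 2 := by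
    rw [eY2m, Matrix.trace_sub, Matrix.trace_sub, Matrix.trace_add,
      Matrix.trace_conjTranspose, trC, tr1, tr2]
    norm_num
  have h23p : (F (SB 1 1 + SB 2 2 + SB 1 2 + SB 2 1)) 2 3 = 1 := by
    rw [eY2p]
    simp [Matrix.add_apply, Matrix.conjTranspose_apply, off1 2 3 (by decide),
      off2 2 3 (by decide), c23, c32]
  have h32p : (F (SB 1 1 + SB 2 2 + SB 1 2 + SB 2 1)) 3 2 = 1 := by
    rw [eY2p]
    simp [Matrix.add_apply, Matrix.conjTranspose_apply, off1 3 2 (by decide),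
      off2 3 2 (by decide), c23, c32]
  have h23m : (F (SB 1 1 + SB 2 2 - SB 1 2 - SB 2 1)) 2 3 = -1 := by
    rw [eY2m]
    simp [Matrix.sub_apply, Matrix.add_apply, Matrix.conjTranspose_apply,
      off1 2 3 (by decide), off2 2 3 (by decide), c23, c32]
  have h32m : (F (SB 1 1 + SB 2 2 - SB 1 2 - SB 2 1)) 3 2 = -1 := by
    rw [eY2m]
    simp [Matrix.sub_apply, Matrix.add_apply, Matrix.conjTranspose_apply,
      off1 3 2 (by decide), off2 3 2 (by decide), c23, c32]
  have k2p := key23 _ psd2p trY2p h23p h32p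
  have k2m := key23m _ psd2m trY2m h23m h32m
  have d00p : (F (SB 1 1) 0 0).re + (F (SB 2 2) 0 0).re + 2 * (F (SB 1 2) 0 0).re = 0 := by
    have := k2p.1
    rw [eY2p] at this
    simp [Matrix.add_apply, Matrix.conjTranspose_apply, Complex.add_re,
      Complex.star_def, Complex.conj_re] at this
    linarith
  have d00m : (F (SB 1 1) 0 0).re + (F (SB 2 2) 0 0).re - 2 * (F (SB 1 2) 0 0).re = 0 := by
    have := k2m.1
    rw [eY2m] at this
    simp [Matrix.sub_apply, Matrix.add_apply, Matrix.conjTranspose_apply, Complex.add_re,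
      Complex.sub_re, Complex.star_def, Complex.conj_re] at this
    linarith
  have d11p : (F (SB 1 1) 1 1).re + (F (SB 2 2) 1 1).re + 2 * (F (SB 1 2) 1 1).re = 0 := by
    have := k2p.2
    rw [eY2p] at this
    simp [Matrix.add_apply, Matrix.conjTranspose_apply, Complex.add_re,
      Complex.star_def, Complex.conj_re] at this
    linarith
  have d11m : (F (SB 1 1) 1 1).re + (F (SB 2 2) 1 1).re - 2 * (F (SB 1 2) 1 1).re = 0 := by
    have := k2m.2
    rw [eY2m] at this
    simp [Matrix.sub_apply, Matrix.add_apply, Matrix.conjTranspose_apply, Complex.add_re,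
      Complex.sub_re, Complex.star_def, Complex.conj_re] at this
    linarith
  have p1_00 : (F (SB 1 1) 0 0).re = 0 := by
    have h1 := ((hDiag 1).2.1 0).2
    have h2 := ((hDiag 2).2.1 0).2
    linarith
  have p1_11 : (F (SB 1 1) 1 1).re = 0 := by
    have h1 := ((hDiag 1).2.1 1).2
    have h2 := ((hDiag 2).2.1 1).2
    linarith
  -- ===== the contradiction: trace of F (SB 1 1) is 1, but all diagonal entries vanish
  have : ((F (SB 1 1)).trace).re = 1 := by rw [tr1]; simp
  rw [Matrix.trace] at this
  simp [Matrix.diag, Fin.sum_univ_four, Complex.add_re] at this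
  linarith
end
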